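/- Let O be a deterministic object, let o1 ∈ ops(O) be one-sided non-commutative w.r.t. o2 ∈ ops(O) in spec(O), and let 𝓘 be a spec-available implementation of O that is consistent under M ∈ {TSO, RA}. Then there exist processes p1, p2 ∈ P, π1 ∈ traces(𝓘(o1,p1)), and π2 ∈ traces(𝓘(o2,p2)) such that, writing σ1 = π1|_mem and σ2 = π2|_mem: (a) if M = TSO, then σ1 or σ2 contains a fence or an RMW event; and (b) if M = RA, then neither σ1 nor σ2 is RW, and one of the following holds: (i) σ1 or σ2 contains an RMW event; (ii) σ1 or σ2 is not LTF; (iii) σ1 is LF and σ2 is TF; or (iv) σ1 is TF and σ2 is LF. -/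

import Mathlib

set_option autoImplicit false

namespace WMM

universe u v

/-! ### Memory actions and events -/

inductive MemAct (Var Val : Type) : Type where
  | write (x : Var) (v : Val)
  | read (x : Var) (v : Val)
  | rmw (x : Var) (vold vnew : Val)
  | fence

structure MemEv (Proc Var Val : Type) : Type where
  proc : Proc
  act : MemAct Var Val

section Mem

variable {Proc Var Val : Type}

def MemEv.isWrite (e : MemEv Proc Var Val) : Prop := ∃ x v, e.act = MemAct.write x v
def MemEv.isRead (e : MemEv Proc Var Val) : Prop := ∃ x v, e.act = MemAct.read x v
def MemEv.isRMW (e : MemEv Proc Var Val) : Prop := ∃ x v w, e.act = MemAct.rmw x v w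
def MemEv.isFence (e : MemEv Proc Var Val) : Prop := e.act = MemAct.fence

/-- The set of processes appearing in an observable memory sequence. -/
def memProcs (σ : List (MemEv Proc Var Val)) : Set Proc := {p | ∃ e ∈ σ, MemEv.proc e = p}

end Mem

/-! ### Shuffles -/

/-- `Shuffle s1 s2 s` means `s` is an interleaving of `s1` and `s2`. -/
inductive Shuffle {α : Type u} : List α → List α → List α → Prop where
  | nil : Shuffle [] [] []
  | left {s1 s2 s : List α} (x : α) : Shuffle s1 s2 s → Shuffle (s1 ++ [x]) s2 (s ++ [x])
  | right {s1 s2 s : List α} (x : α) : Shuffle s1 s2 s → Shuffle s1 (s2 ++ [x]) (s ++ [x])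

/-! ### Paths of a labeled transition relation -/

inductive LTSPath {S : Type u} {L : Type v} (step : S → L → S → Prop) : S → List L → S → Prop where
  | nil (s : S) : LTSPath step s [] s
  | cons {s s' s'' : S} {l : L} {ls : List L} :
      step s l s' → LTSPath step s' ls s'' → LTSPath step s (l :: ls) s''

/-! ### Memory models -/

/-- A memory model: an LTS whose labels are memory events or the silent label `τ = none`. -/
structure MemModel (Proc Var Val : Type) : Type 1 where
  State : Type
  init : State
  step : State → Option (MemEv Proc Var Val) → State → Prop

section MemModel

variable {Proc Var Val : Type}

/-- A state is stable if no silent (`τ`) transition is enabled. -/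
def MemModel.Stable (M : MemModel Proc Var Val) (q : M.State) : Prop :=
  ∀ q', ¬ M.step q none q'

/-- Observable memory sequences from a state: traces with `τ` steps erased. -/
def MemModel.OTraces (M : MemModel Proc Var Val) (q : M.State) :
    Set (List (MemEv Proc Var Val)) :=
  {σ | ∃ (π : List (Option (MemEv Proc Var Val))) (q' : M.State),
      LTSPath M.step q π q' ∧ π.reduceOption = σ}

def WeaklyMergeable (M : MemModel Proc Var Val) (σ1 σ2 : List (MemEv Proc Var Val)) : Prop :=
  ∀ q0 : M.State, M.Stable q0 → σ1 ∈ M.OTraces q0 → σ2 ∈ M.OTraces q0 →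
    ∃ σ, Shuffle σ1 σ2 σ ∧ σ ∈ M.OTraces q0

def StronglyMergeable (M : MemModel Proc Var Val) (σ1 σ2 : List (MemEv Proc Var Val)) : Prop :=
  ∀ q0 : M.State, M.Stable q0 → σ1 ∈ M.OTraces q0 → σ2 ∈ M.OTraces q0 →
    ∀ σ, Shuffle σ1 σ2 σ → σ ∈ M.OTraces q0

/-- Weak/strong mergeability, selected by a Boolean flag. -/
def MemMergeable (strong : Bool) (M : MemModel Proc Var Val)
    (σ1 σ2 : List (MemEv Proc Var Val)) : Prop :=
  if strong then StronglyMergeable M σ1 σ2 else WeaklyMergeable M σ1 σ2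

end MemModel

/-! ### The SCM, TSO and RA memory models -/

section Models

variable (Proc Var Val : Type)

inductive SCMStep [DecidableEq Var] :
    (Var → Val) → Option (MemEv Proc Var Val) → (Var → Val) → Prop where
  | write (m : Var → Val) (p : Proc) (x : Var) (v : Val) :
      SCMStep m (some ⟨p, MemAct.write x v⟩) (Function.update m x v)
  | read (m : Var → Val) (p : Proc) (x : Var) :
      SCMStep m (some ⟨p, MemAct.read x (m x)⟩) m
  | rmw (m : Var → Val) (p : Proc) (x : Var) (vnew : Val) :
      SCMStep m (some ⟨p, MemAct.rmw x (m x) vnew⟩) (Function.update m x vnew)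
  | fence (m : Var → Val) (p : Proc) :
      SCMStep m (some ⟨p, MemAct.fence⟩) m

def SCMModel [DecidableEq Var] [Zero Val] : MemModel Proc Var Val where
  State := Var → Val
  init := fun _ => 0
  step := SCMStep Proc Var Val

inductive TSOStep [DecidableEq Proc] [DecidableEq Var] :
    (Var → Val) × (Proc → List (Var × Val)) → Option (MemEv Proc Var Val) →
      (Var → Val) × (Proc → List (Var × Val)) → Prop where
  | write (m : Var → Val) (b : Proc → List (Var × Val)) (p : Proc) (x : Var) (v : Val) :
      TSOStep (m, b) (some ⟨p, MemAct.write x v⟩)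
        (m, Function.update b p (b p ++ [(x, v)]))
  | readBuffer (m : Var → Val) (b : Proc → List (Var × Val)) (p : Proc) (x : Var) (v : Val) :
      ((b p).filter (fun pr => decide (pr.1 = x))).getLast? = some (x, v) →
      TSOStep (m, b) (some ⟨p, MemAct.read x v⟩) (m, b)
  | readMemory (m : Var → Val) (b : Proc → List (Var × Val)) (p : Proc) (x : Var) :
      (b p).filter (fun pr => decide (pr.1 = x)) = [] →
      TSOStep (m, b) (some ⟨p, MemAct.read x (m x)⟩) (m, b)
  | rmw (m : Var → Val) (b : Proc → List (Var × Val)) (p : Proc) (x : Var) (vnew : Val) :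
      b p = [] →
      TSOStep (m, b) (some ⟨p, MemAct.rmw x (m x) vnew⟩) (Function.update m x vnew, b)
  | fence (m : Var → Val) (b : Proc → List (Var × Val)) (p : Proc) :
      b p = [] → TSOStep (m, b) (some ⟨p, MemAct.fence⟩) (m, b)
  | propagate (m : Var → Val) (b : Proc → List (Var × Val)) (p : Proc) (x : Var) (v : Val)
      (β : List (Var × Val)) :
      b p = (x, v) :: β →
      TSOStep (m, b) none (Function.update m x v, Function.update b p β)

def TSOModel [DecidableEq Proc] [DecidableEq Var] [Zero Val] : MemModel Proc Var Val where
  State := (Var → Val) × (Proc → List (Var × Val))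
  init := (fun _ => 0, fun _ => [])
  step := TSOStep Proc Var Val

/-- A message of the RA memory model. -/
structure RAMsg (Var Val : Type) : Type where
  var : Var
  val : Val
  time : ℕ
  view : Var → ℕ

structure RAState (Proc Var Val : Type) : Type where
  mem : Set (RAMsg Var Val)
  view : Proc → Var → ℕ
  fview : Var → ℕ

end Models

/-- Pointwise join (maximum) of two views. -/
def viewJoin {Var : Type} (V1 V2 : Var → ℕ) : Var → ℕ := fun y => max (V1 y) (V2 y)

section RA

variable (Proc Var Val : Type)

inductive RAStep [DecidableEq Proc] [DecidableEq Var] :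
    RAState Proc Var Val → Option (MemEv Proc Var Val) → RAState Proc Var Val → Prop where
  | write (s : RAState Proc Var Val) (p : Proc) (x : Var) (v : Val) (t : ℕ) :
      s.view p x < t →
      (∀ μ ∈ s.mem, μ.var = x → μ.time ≠ t) →
      RAStep s (some ⟨p, MemAct.write x v⟩)
        ⟨insert ⟨x, v, t, Function.update (s.view p) x t⟩ s.mem,
         Function.update s.view p (Function.update (s.view p) x t), s.fview⟩
  | read (s : RAState Proc Var Val) (p : Proc) (x : Var) (v : Val) (V : Var → ℕ) :
      (⟨x, v, s.view p x, V⟩ : RAMsg Var Val) ∈ s.mem →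
      RAStep s (some ⟨p, MemAct.read x v⟩) s
  | rmw (s : RAState Proc Var Val) (p : Proc) (x : Var) (vexp vnew : Val) (V : Var → ℕ) :
      (⟨x, vexp, s.view p x, V⟩ : RAMsg Var Val) ∈ s.mem →
      (∀ μ ∈ s.mem, μ.var = x → μ.time ≠ s.view p x + 1) →
      RAStep s (some ⟨p, MemAct.rmw x vexp vnew⟩)
        ⟨insert ⟨x, vnew, s.view p x + 1, Function.update (s.view p) x (s.view p x + 1)⟩ s.mem,
         Function.update s.view p (Function.update (s.view p) x (s.view p x + 1)), s.fview⟩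
  | fence (s : RAState Proc Var Val) (p : Proc) :
      RAStep s (some ⟨p, MemAct.fence⟩)
        ⟨s.mem, Function.update s.view p (viewJoin (s.view p) s.fview),
         viewJoin (s.view p) s.fview⟩
  | propagate (s : RAState Proc Var Val) (p : Proc) (μ : RAMsg Var Val) :
      μ ∈ s.mem → s.view p μ.var < μ.time →
      RAStep s none
        ⟨s.mem, Function.update s.view p (viewJoin (s.view p) μ.view), s.fview⟩

def RAModel [DecidableEq Proc] [DecidableEq Var] [Zero Val] : MemModel Proc Var Val where
  State := RAState Proc Var Val
  init := ⟨{μ | ∃ x : Var, μ = ⟨x, 0, 0, fun _ => 0⟩}, fun _ _ => 0, fun _ => 0⟩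
  step := RAStep Proc Var Val

end RA

/-! ### Well-behaved memory models -/

section WellBehaved

variable {Proc Var Val : Type}

/-- Reachability by silent steps. -/
def TauReach (M : MemModel Proc Var Val) : M.State → M.State → Prop :=
  Relation.ReflTransGen (fun q q' => M.step q none q')

/-- A memory model is well-behaved if there is a simulation from SCM into its stable states. -/
def WellBehaved [DecidableEq Var] [Zero Val] (M : MemModel Proc Var Val) : Prop :=
  ∃ R : (Var → Val) → M.State → Prop,
    (∀ m q, R m q → M.Stable q) ∧
    R (fun _ => (0 : Val)) M.init ∧
    (∀ m q, R m q → ∀ (l : Option (MemEv Proc Var Val)) (m' : Var → Val),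
      SCMStep Proc Var Val m l m' →
      ∃ q1 q' : M.State, M.step q l q1 ∧ TauReach M q1 q' ∧ M.Stable q' ∧ R m' q')

end WellBehaved

/-! ### Patterns of observable memory sequences -/

section Patterns

variable {Proc Var Val : Type}

def IsSolo (σ : List (MemEv Proc Var Val)) : Prop :=
  ∀ e ∈ σ, ∀ e' ∈ σ, MemEv.proc e = MemEv.proc e'

def IsRW (σ : List (MemEv Proc Var Val)) : Prop :=
  ∀ e ∈ σ, MemEv.isWrite e ∨ MemEv.isRead e

def IsRWF (σ : List (MemEv Proc Var Val)) : Prop :=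
  ∀ e ∈ σ, MemEv.isWrite e ∨ MemEv.isRead e ∨ MemEv.isFence e

/-- Read-before-write: no read-after-write pattern on distinct variables. -/
def IsRBW (σ : List (MemEv Proc Var Val)) : Prop :=
  ∀ (k1 k2 : ℕ) (e1 e2 : MemEv Proc Var Val) (x y : Var) (v w : Val),
    k1 < k2 → σ[k1]? = some e1 → σ[k2]? = some e2 →
    e1.act = MemAct.write x v → e2.act = MemAct.read y w → x ≠ y →
    ∃ (k : ℕ) (e : MemEv Proc Var Val) (u : Val),
      k1 < k ∧ k < k2 ∧ σ[k]? = some e ∧ e.act = MemAct.write y u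

/-- Trailing-fence: no fence is immediately followed by a non-fence event. -/
def IsTF (σ : List (MemEv Proc Var Val)) : Prop :=
  ∀ (k : ℕ) (e e' : MemEv Proc Var Val),
    σ[k]? = some e → σ[k + 1]? = some e' → MemEv.isFence e → MemEv.isFence e'

/-- Leading-fence: no fence is immediately preceded by a non-fence event. -/
def IsLF (σ : List (MemEv Proc Var Val)) : Prop :=
  ∀ (k : ℕ) (e e' : MemEv Proc Var Val),
    σ[k]? = some e → σ[k + 1]? = some e' → MemEv.isFence e' → MemEv.isFence e

def IsLTF (σ : List (MemEv Proc Var Val)) : Prop :=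
  ∃ σ' σ'' : List (MemEv Proc Var Val), σ = σ' ++ σ'' ∧ IsLF σ' ∧ IsTF σ''

def IsPPTF [DecidableEq Proc] (σ : List (MemEv Proc Var Val)) : Prop :=
  ∀ p : Proc, IsTF (σ.filter (fun e => decide (e.proc = p)))

def IsPPLF [DecidableEq Proc] (σ : List (MemEv Proc Var Val)) : Prop :=
  ∀ p : Proc, IsLF (σ.filter (fun e => decide (e.proc = p)))

end Patterns

/-! ### Objects, events and histories -/

inductive ObjAct (Op Ret : Type) : Type where
  | inv (o : Op)
  | res (u : Ret)

structure ObjEv (Proc Op Ret : Type) : Type where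
  proc : Proc
  act : ObjAct Op Ret

inductive EvAct (Var Val Op Ret : Type) : Type where
  | mem (a : MemAct Var Val)
  | inv (o : Op)
  | res (u : Ret)

/-- A general event: a memory event or an object event of some process. -/
structure Ev (Proc Var Val Op Ret : Type) : Type where
  proc : Proc
  act : EvAct Var Val Op Ret

section Events

variable {Proc Var Val Op Ret : Type}

def ObjAct.isInv : ObjAct Op Ret → Prop
  | ObjAct.inv _ => True
  | _ => False

def ObjAct.isRes : ObjAct Op Ret → Prop
  | ObjAct.res _ => True
  | _ => False

def Ev.toMem : Ev Proc Var Val Op Ret → Option (MemEv Proc Var Val)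
  | ⟨p, EvAct.mem a⟩ => some ⟨p, a⟩
  | _ => none

def Ev.toObj : Ev Proc Var Val Op Ret → Option (ObjEv Proc Op Ret)
  | ⟨p, EvAct.inv o⟩ => some ⟨p, ObjAct.inv o⟩
  | ⟨p, EvAct.res u⟩ => some ⟨p, ObjAct.res u⟩
  | _ => none

/-- Restriction of an event sequence to its memory events. -/
def restrictMem (π : List (Ev Proc Var Val Op Ret)) : List (MemEv Proc Var Val) :=
  π.filterMap Ev.toMem

/-- Restriction of an event sequence to its object events. -/
def restrictObj (π : List (Ev Proc Var Val Op Ret)) : List (ObjEv Proc Op Ret) :=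
  π.filterMap Ev.toObj

def procsEv (π : List (Ev Proc Var Val Op Ret)) : Set Proc := {p | ∃ e ∈ π, Ev.proc e = p}

def procsObj (h : List (ObjEv Proc Op Ret)) : Set Proc := {p | ∃ e ∈ h, ObjEv.proc e = p}

def Ev.isWriteEv (e : Ev Proc Var Val Op Ret) : Prop :=
  ∃ x v, e.act = EvAct.mem (MemAct.write x v)

def Ev.isReadEv (e : Ev Proc Var Val Op Ret) : Prop :=
  ∃ x v, e.act = EvAct.mem (MemAct.read x v)

def Ev.isResEv (e : Ev Proc Var Val Op Ret) : Prop := ∃ u, e.act = EvAct.res u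

def Ev.isFenceEv (e : Ev Proc Var Val Op Ret) : Prop := e.act = EvAct.mem MemAct.fence

/-- The two-event history `⟨p : o ⇒ u⟩`. -/
def invres (p : Proc) (o : Op) (u : Ret) : List (ObjEv Proc Op Ret) :=
  [⟨p, ObjAct.inv o⟩, ⟨p, ObjAct.res u⟩]

/-- Complete sequential histories: concatenations of matching invocation–response pairs. -/
inductive CompleteSeq : List (ObjEv Proc Op Ret) → Prop where
  | nil : CompleteSeq []
  | cons (p : Proc) (o : Op) (u : Ret) {h : List (ObjEv Proc Op Ret)} :
      CompleteSeq h → CompleteSeq (⟨p, ObjAct.inv o⟩ :: ⟨p, ObjAct.res u⟩ :: h)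

/-- Sequential histories: prefixes of complete sequential histories. -/
def Sequential (h : List (ObjEv Proc Op Ret)) : Prop :=
  ∃ h' : List (ObjEv Proc Op Ret), CompleteSeq h' ∧ h <+: h'

def WellFormed [DecidableEq Proc] (h : List (ObjEv Proc Op Ret)) : Prop :=
  ∀ p : Proc, Sequential (h.filter (fun e => decide (e.proc = p)))

/-- Complete histories: well-formed, and each process's restriction is empty or
ends with a response event. -/
def CompleteH [DecidableEq Proc] (h : List (ObjEv Proc Op Ret)) : Prop :=
  WellFormed h ∧
    ∀ p : Proc, h.filter (fun e => decide (e.proc = p)) = [] ∨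
      ∃ e : ObjEv Proc Op Ret,
        (h.filter (fun e => decide (e.proc = p))).getLast? = some e ∧ e.act.isRes

end Events

/-! ### Reorderings and linearization -/

/-- `Reorder R s s'` : `s'` is an `R`-reordering of `s`. -/
def Reorder {α : Type u} (R : α → α → Prop) (s s' : List α) : Prop :=
  ∃ f : Fin s.length ≃ Fin s'.length,
    (∀ i : Fin s.length, s'.get (f i) = s.get i) ∧
    ∀ i j : Fin s.length, i < j → R (s.get i) (s.get j) → f i < f j

section Lin

variable {Proc Var Val Op Ret : Type}

/-- The `sproc` relation on general events: same process. -/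
def sprocEv (e1 e2 : Ev Proc Var Val Op Ret) : Prop := e1.proc = e2.proc

/-- The `lin` relation on object events. -/
def linRel (e1 e2 : ObjEv Proc Op Ret) : Prop :=
  e1.proc = e2.proc ∨ (e1.act.isRes ∧ e2.act.isInv)

/-- `h ⊑ H'`: some history in `H'` linearizes `h`. -/
def LinInto (Spec : Set (List (ObjEv Proc Op Ret))) (h : List (ObjEv Proc Op Ret)) : Prop :=
  ∃ h' ∈ Spec, Reorder linRel h h'

/-- A specification: a prefix-closed set of complete sequential histories. -/
def IsSpec (Spec : Set (List (ObjEv Proc Op Ret))) : Prop :=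
  (∀ h ∈ Spec, CompleteSeq h) ∧
  (∀ h ∈ Spec, ∀ h' : List (ObjEv Proc Op Ret), h' <+: h → CompleteSeq h' → h' ∈ Spec)

/-- A deterministic object: no two specification histories have a longest common prefix
ending with an invocation. -/
def Deterministic (Spec : Set (List (ObjEv Proc Op Ret))) : Prop :=
  ∀ h1 ∈ Spec, ∀ h2 ∈ Spec, ∀ (g : List (ObjEv Proc Op Ret)) (p : Proc) (o : Op),
    (g ++ [⟨p, ObjAct.inv o⟩]) <+: h1 → (g ++ [⟨p, ObjAct.inv o⟩]) <+: h2 →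
    ∃ e : ObjEv Proc Op Ret,
      (g ++ [⟨p, ObjAct.inv o⟩, e]) <+: h1 ∧ (g ++ [⟨p, ObjAct.inv o⟩, e]) <+: h2

def WeaklySpecMergeableAfter (Spec : Set (List (ObjEv Proc Op Ret)))
    (h0 h1 h2 : List (ObjEv Proc Op Ret)) : Prop :=
  LinInto Spec (h0 ++ h1) → LinInto Spec (h0 ++ h2) →
    ∃ h, Shuffle h1 h2 h ∧ LinInto Spec (h0 ++ h)

def StronglySpecMergeableAfter (Spec : Set (List (ObjEv Proc Op Ret)))
    (h0 h1 h2 : List (ObjEv Proc Op Ret)) : Prop :=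
  LinInto Spec (h0 ++ h1) → LinInto Spec (h0 ++ h2) →
    ∀ h, Shuffle h1 h2 h → LinInto Spec (h0 ++ h)

def SpecMergeableAfter (strong : Bool) (Spec : Set (List (ObjEv Proc Op Ret)))
    (h0 h1 h2 : List (ObjEv Proc Op Ret)) : Prop :=
  if strong then StronglySpecMergeableAfter Spec h0 h1 h2
  else WeaklySpecMergeableAfter Spec h0 h1 h2

/-- One-sided non-commutativity. -/
def OneSidedNonComm (Spec : Set (List (ObjEv Proc Op Ret))) (o1 o2 : Op) : Prop :=
  ∃ (h0 : List (ObjEv Proc Op Ret)) (p1 p2 : Proc) (u1 v1 u2 : Ret),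
    CompleteSeq h0 ∧ p1 ≠ p2 ∧ u1 ≠ v1 ∧
    h0 ++ invres p1 o1 u1 ∈ Spec ∧
    h0 ++ invres p2 o2 u2 ++ invres p1 o1 v1 ∈ Spec

/-- Two-sided non-commutativity. -/
def TwoSidedNonComm (Spec : Set (List (ObjEv Proc Op Ret))) (o1 o2 : Op) : Prop :=
  ∃ (h0 : List (ObjEv Proc Op Ret)) (p1 p2 : Proc) (u1 v1 u2 v2 : Ret),
    CompleteSeq h0 ∧ p1 ≠ p2 ∧ u1 ≠ v1 ∧ u2 ≠ v2 ∧
    h0 ++ invres p1 o1 u1 ++ invres p2 o2 v2 ∈ Spec ∧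
    h0 ++ invres p2 o2 u2 ++ invres p1 o1 v1 ∈ Spec

end Lin

/-! ### Implementations -/

/-- An implementation of an operation for a process `p`: an LTS labeled by events of `p`
in which a response event is always the last transition. -/
structure OpImpl (Proc Var Val Op Ret : Type) (p : Proc) : Type 1 where
  State : Type
  init : State
  step : State → Ev Proc Var Val Op Ret → State → Prop
  proc_eq : ∀ q e q', step q e q' → Ev.proc e = p
  res_final : ∀ (q : State) (u : Ret) (q' : State),
    step q ⟨p, EvAct.res u⟩ q' → ∀ e q'', ¬ step q' e q''

section Impl

variable {Proc Var Val Op Ret : Type}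

def OpImpl.traces {p : Proc} (Iop : OpImpl Proc Var Val Op Ret p) :
    Set (List (Ev Proc Var Val Op Ret)) :=
  {π | ∃ q : Iop.State, LTSPath Iop.step Iop.init π q}

/-- An implementation of an object. -/
def Impl (Proc Var Val Op Ret : Type) : Type 1 :=
  (o : Op) → (p : Proc) → OpImpl Proc Var Val Op Ret p

/-- Per-process states of the system induced by an implementation: `none` is idle. -/
def SIPState (I : Impl Proc Var Val Op Ret) (p : Proc) : Type :=
  Option ((o : Op) × (I o p).State)

/-- Per-process transitions of the system induced by an implementation. -/
inductive SIPStep (I : Impl Proc Var Val Op Ret) (p : Proc) :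
    SIPState I p → Ev Proc Var Val Op Ret → SIPState I p → Prop where
  | invoke (o : Op) :
      SIPStep I p none ⟨p, EvAct.inv o⟩ (some ⟨o, (I o p).init⟩)
  | memStep {o : Op} {q q' : (I o p).State} (a : MemAct Var Val) :
      (I o p).step q ⟨p, EvAct.mem a⟩ q' →
      SIPStep I p (some ⟨o, q⟩) ⟨p, EvAct.mem a⟩ (some ⟨o, q'⟩)
  | resStep {o : Op} {q q' : (I o p).State} (u : Ret) :
      (I o p).step q ⟨p, EvAct.res u⟩ q' →
      SIPStep I p (some ⟨o, q⟩) ⟨p, EvAct.res u⟩ none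

def SIState (I : Impl Proc Var Val Op Ret) : Type :=
  (p : Proc) → SIPState I p

/-- The system induced by an implementation interleaves the processes. -/
inductive SIStep [DecidableEq Proc] (I : Impl Proc Var Val Op Ret) :
    SIState I → Ev Proc Var Val Op Ret → SIState I → Prop where
  | mk (s : SIState I) (p : Proc) (e : Ev Proc Var Val Op Ret) (t : SIPState I p) :
      SIPStep I p (s p) e t → SIStep I s e (Function.update s p t)

def ImplTraces [DecidableEq Proc] (I : Impl Proc Var Val Op Ret) :
    Set (List (Ev Proc Var Val Op Ret)) :=
  {π | ∃ s : SIState I, LTSPath (SIStep I) (fun _ => none) π s}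

/-- Histories generated by `I` after `π0` under memory model `M`. -/
def GenHist [DecidableEq Proc] (π0 : List (Ev Proc Var Val Op Ret))
    (I : Impl Proc Var Val Op Ret) (M : MemModel Proc Var Val) :
    Set (List (ObjEv Proc Op Ret)) :=
  {h | ∃ π : List (Ev Proc Var Val Op Ret),
      π0 ++ π ∈ ImplTraces I ∧ restrictObj π = h ∧
      restrictMem (π0 ++ π) ∈ M.OTraces M.init}

/-- Consistency: every complete generated history linearizes into the specification. -/
def Consistent [DecidableEq Proc] (I : Impl Proc Var Val Op Ret)
    (M : MemModel Proc Var Val) (Spec : Set (List (ObjEv Proc Op Ret))) : Prop :=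
  ∀ h ∈ GenHist [] I M, CompleteH h → LinInto Spec h

/-- Availability after `h0` w.r.t. `h`. -/
def AvailableAfter [DecidableEq Proc] [DecidableEq Var] [Zero Val]
    (I : Impl Proc Var Val Op Ret) (h0 h : List (ObjEv Proc Op Ret)) : Prop :=
  ∀ π0 ∈ ImplTraces I,
    restrictMem π0 ∈ (SCMModel Proc Var Val).OTraces (SCMModel Proc Var Val).init →
    restrictObj π0 = h0 →
    h ∈ GenHist π0 I (SCMModel Proc Var Val)

def SpecAvailable [DecidableEq Proc] [DecidableEq Var] [Zero Val]
    (I : Impl Proc Var Val Op Ret) (Spec : Set (List (ObjEv Proc Op Ret))) : Prop :=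
  ∀ h0 h : List (ObjEv Proc Op Ret), CompleteSeq h0 → CompleteSeq h →
    h0 ++ h ∈ Spec → AvailableAfter I h0 h

end Impl

/-! ### Fence insertion -/

section Fence

variable {Proc Var Val Op Ret : Type}

/-- `FenceInsertion π π'` : `π'` is obtained from `π` by inserting fence events. -/
inductive FenceInsertion : List (Ev Proc Var Val Op Ret) → List (Ev Proc Var Val Op Ret) → Prop where
  | nil : FenceInsertion [] []
  | keep (e : Ev Proc Var Val Op Ret) {π π' : List (Ev Proc Var Val Op Ret)} :
      FenceInsertion π π' → FenceInsertion (e :: π) (e :: π')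
  | fence (p : Proc) {π π' : List (Ev Proc Var Val Op Ret)} :
      FenceInsertion π π' → FenceInsertion π (⟨p, EvAct.mem MemAct.fence⟩ :: π')

/-- Every write is separated from every later read or response by a fence. -/
def FencedWrites (π : List (Ev Proc Var Val Op Ret)) : Prop :=
  ∀ (i j : ℕ) (ei ej : Ev Proc Var Val Op Ret),
    i < j → π[i]? = some ei → π[j]? = some ej →
    Ev.isWriteEv ei → (Ev.isReadEv ej ∨ Ev.isResEv ej) →
    ∃ (k : ℕ) (ek : Ev Proc Var Val Op Ret),
      i < k ∧ k < j ∧ π[k]? = some ek ∧ Ev.isFenceEv ek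

/-- Histories generated by `I` under `M` (from the initial state). -/
def GeneratedHistories [DecidableEq Proc] (I : Impl Proc Var Val Op Ret)
    (M : MemModel Proc Var Val) : Set (List (ObjEv Proc Op Ret)) :=
  {h | ∃ π ∈ ImplTraces I, restrictObj π = h ∧ restrictMem π ∈ M.OTraces M.init}

end Fence

/-! ### The snapshot object -/

inductive SnapOp (W : Type) : Type where
  | update (w : W)
  | scan

inductive SnapRet (Proc W : Type) : Type where
  | ack
  | vec (v : Proc → Option W)

section Snapshot

variable {Proc W : Type}

/-- The sequential specification of the single-writer snapshot object, threaded
through the current contents `s`. -/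
inductive SnapSpecFrom [DecidableEq Proc] :
    (Proc → Option W) → List (ObjEv Proc (SnapOp W) (SnapRet Proc W)) → Prop where
  | nil (s : Proc → Option W) : SnapSpecFrom s []
  | update (s : Proc → Option W) (p : Proc) (w : W)
      {h : List (ObjEv Proc (SnapOp W) (SnapRet Proc W))} :
      SnapSpecFrom (Function.update s p (some w)) h →
      SnapSpecFrom s (⟨p, ObjAct.inv (SnapOp.update w)⟩ :: ⟨p, ObjAct.res SnapRet.ack⟩ :: h)
  | scan (s : Proc → Option W) (p : Proc)
      {h : List (ObjEv Proc (SnapOp W) (SnapRet Proc W))} :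
      SnapSpecFrom s h →
      SnapSpecFrom s (⟨p, ObjAct.inv SnapOp.scan⟩ :: ⟨p, ObjAct.res (SnapRet.vec s)⟩ :: h)

def SnapSpec (Proc W : Type) [DecidableEq Proc] :
    Set (List (ObjEv Proc (SnapOp W) (SnapRet Proc W))) :=
  {h | SnapSpecFrom (fun _ => none) h}

end Snapshot

/-! ### Auxiliary infrastructure -/

section PathAux

universe w
variable {S : Type u} {L : Type v} {step : S → L → S → Prop}

theorem LTSPath.append_path {s t u : S} {π1 π2 : List L}
    (h1 : LTSPath step s π1 t) (h2 : LTSPath step t π2 u) :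
    LTSPath step s (π1 ++ π2) u := by
  induction h1 with
  | nil => simpa using h2
  | cons hst _ ih => exact LTSPath.cons hst (ih h2)

theorem LTSPath.split {s u : S} {π1 π2 : List L} (h : LTSPath step s (π1 ++ π2) u) :
    ∃ t, LTSPath step s π1 t ∧ LTSPath step t π2 u := by
  induction π1 generalizing s with
  | nil => exact ⟨s, LTSPath.nil s, by simpa using h⟩
  | cons e π1 ih =>
    rw [List.cons_append] at h
    cases h with
    | cons hst hrest =>
      obtain ⟨t, h1, h2⟩ := ih hrest
      exact ⟨t, LTSPath.cons hst h1, h2⟩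

theorem LTSPath.prefix_path {s u : S} {π1 π2 : List L} (h : LTSPath step s (π1 ++ π2) u) :
    ∃ t, LTSPath step s π1 t := (h.split).imp fun _ h => h.1

end PathAux

section OPathAux

variable {S : Type u} {L : Type v}

/-- Paths over an `Option`-labeled LTS, recording only the observable labels. -/
inductive OPath (step : S → Option L → S → Prop) : S → List L → S → Prop where
  | nil (s : S) : OPath step s [] s
  | obs {s s' t : S} {e : L} {σ : List L} :
      step s (some e) s' → OPath step s' σ t → OPath step s (e :: σ) t
  | tau {s s' t : S} {σ : List L} :
      step s none s' → OPath step s' σ t → OPath step s σ t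

theorem OPath.append_opath {step : S → Option L → S → Prop} {s t u : S} {σ1 σ2 : List L}
    (h1 : OPath step s σ1 t) (h2 : OPath step t σ2 u) : OPath step s (σ1 ++ σ2) u := by
  induction h1 with
  | nil => simpa using h2
  | obs hst _ ih => exact OPath.obs hst (ih h2)
  | tau hst _ ih => exact OPath.tau hst (ih h2)

theorem OPath.exists_path {step : S → Option L → S → Prop} {s t : S} {σ : List L}
    (h : OPath step s σ t) : ∃ π, LTSPath step s π t ∧ π.reduceOption = σ := by
  induction h with
  | nil s => exact ⟨[], LTSPath.nil s, rfl⟩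
  | obs hst _ ih =>
    obtain ⟨π, hπ, hred⟩ := ih
    exact ⟨some _ :: π, LTSPath.cons hst hπ, by simp [hred]⟩
  | tau hst _ ih =>
    obtain ⟨π, hπ, hred⟩ := ih
    exact ⟨none :: π, LTSPath.cons hst hπ, by simp [hred]⟩

/-- The pure (observable) step relation of an `Option`-labeled LTS. -/
def PStep (step : S → Option L → S → Prop) : S → L → S → Prop := fun s e t => step s (some e) t

theorem OPath.of_pure {step : S → Option L → S → Prop} {s t : S} {σ : List L}
    (h : LTSPath (PStep step) s σ t) : OPath step s σ t := by
  induction h with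
  | nil s => exact OPath.nil s
  | cons hst _ ih => exact OPath.obs hst ih

end OPathAux

section MemModelAux

variable {Proc Var Val : Type}

theorem mem_OTraces_of_OPath {M : MemModel Proc Var Val} {q q' : M.State}
    {σ : List (MemEv Proc Var Val)} (h : OPath M.step q σ q') : σ ∈ M.OTraces q := by
  obtain ⟨π, hπ, hred⟩ := h.exists_path
  exact ⟨π, q', hπ, hred⟩

end MemModelAux

section SCMAux

variable {Proc Var Val : Type} [DecidableEq Var]

/-- SCM has no silent steps, so its paths are pure. -/
theorem scm_pure {m q : Var → Val} {π : List (Option (MemEv Proc Var Val))}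
    (h : LTSPath (SCMStep Proc Var Val) m π q) :
    LTSPath (PStep (SCMStep Proc Var Val)) m π.reduceOption q := by
  induction h with
  | nil s => exact LTSPath.nil s
  | @cons s s' s'' l ls hst hrest ih =>
    cases l with
    | none => cases hst
    | some e => exact LTSPath.cons hst ih

theorem scm_step_det {m q1 q2 : Var → Val} {e : MemEv Proc Var Val}
    (h1 : PStep (SCMStep Proc Var Val) m e q1) (h2 : PStep (SCMStep Proc Var Val) m e q2) :
    q1 = q2 := by
  cases h1 <;> cases h2 <;> rfl

theorem scm_path_det {m q1 q2 : Var → Val} {σ : List (MemEv Proc Var Val)}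
    (h1 : LTSPath (PStep (SCMStep Proc Var Val)) m σ q1)
    (h2 : LTSPath (PStep (SCMStep Proc Var Val)) m σ q2) : q1 = q2 := by
  induction σ generalizing m with
  | nil => cases h1; cases h2; rfl
  | cons e σ ih =>
    cases h1 with
    | cons hst1 hrest1 =>
      cases h2 with
      | cons hst2 hrest2 =>
        exact ih (scm_step_det hst1 hst2 ▸ hrest1) hrest2

/-- Pure SCM steps keep the label's shape in sync with the memory. -/
theorem scm_obs_mem [Zero Val] {m : Var → Val} {σ : List (MemEv Proc Var Val)}
    (h : σ ∈ (SCMModel Proc Var Val).OTraces m) :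
    ∃ m', LTSPath (PStep (SCMStep Proc Var Val)) m σ m' := by
  obtain ⟨π, q', hπ, hred⟩ := h
  exact ⟨q', hred ▸ scm_pure hπ⟩

end SCMAux
/-! ### System path lemmas -/

section SysAux

set_option linter.unusedSectionVars false

variable {Proc Var Val Op Ret : Type} [DecidableEq Proc] {I : Impl Proc Var Val Op Ret}

theorem sip_proc {p : Proc} {st st' : SIPState I p} {e : Ev Proc Var Val Op Ret}
    (h : SIPStep I p st e st') : e.proc = p := by
  cases h <;> rfl

theorem sistep_inv {s s' : SIState I} {e : Ev Proc Var Val Op Ret} (h : SIStep I s e s') :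
    ∃ (p : Proc) (t : SIPState I p), SIPStep I p (s p) e t ∧ s' = Function.update s p t := by
  cases h
  rename_i p t hpt
  exact ⟨p, t, hpt, rfl⟩

theorem sys_project {π : List (Ev Proc Var Val Op Ret)} {s s' : SIState I}
    (h : LTSPath (SIStep I) s π s') (p : Proc) :
    LTSPath (SIPStep I p) (s p) (π.filter (fun e => decide (e.proc = p))) (s' p) := by
  induction h with
  | nil s => exact LTSPath.nil _
  | @cons s s₁ s'' e π hst hrest ih =>
    obtain ⟨q, tq, hq, rfl⟩ := sistep_inv hst
    have hep : e.proc = q := sip_proc hq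
    by_cases hqp : q = p
    · subst hqp
      have hfil : List.filter (fun e => decide (e.proc = q)) (e :: π)
          = e :: List.filter (fun e => decide (e.proc = q)) π := by
        simp [List.filter_cons, hep]
      rw [hfil]
      exact LTSPath.cons (by simpa using hq) (by simpa [Function.update_self q tq s] using ih)
    · have hfil : List.filter (fun e => decide (e.proc = p)) (e :: π)
          = List.filter (fun e => decide (e.proc = p)) π := by
        simp [List.filter_cons, hep, hqp]
      rw [hfil]
      simpa [Function.update_of_ne (Ne.symm hqp) tq s] using ih

theorem sys_frame {p : Proc} {π : List (Ev Proc Var Val Op Ret)} {s s' : SIState I}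
    (hall : ∀ e ∈ π, Ev.proc e = p) (h : LTSPath (SIStep I) s π s') :
    ∀ t : SIState I, t p = s p → LTSPath (SIStep I) t π (Function.update t p (s' p)) := by
  induction h with
  | nil s =>
    intro t ht
    rw [← ht, Function.update_eq_self p t]
    exact LTSPath.nil t
  | @cons s s₁ s'' e π hst hrest ih =>
    intro t ht
    obtain ⟨q, tq, hq, rfl⟩ := sistep_inv hst
    have hq' : q = p := by rw [← sip_proc hq]; exact hall e (by simp)
    subst hq'
    have step' : SIStep I t e (Function.update t q tq) :=
      SIStep.mk t q e tq (ht ▸ hq)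
    have ihres := ih (fun e he => hall e (by simp [he])) (Function.update t q tq)
      (by simp [Function.update_self q tq t, Function.update_self q tq s])
    refine LTSPath.cons step' ?_
    simpa [Function.update_idem tq (s'' q) t] using ihres

theorem restrictObj_sublist_mem {π : List (Ev Proc Var Val Op Ret)}
    {e : Ev Proc Var Val Op Ret} {x : ObjEv Proc Op Ret}
    (hx : x ∈ restrictObj π) : x ∈ restrictObj (e :: π) := by
  simp only [restrictObj, List.filterMap_cons]
  cases h : Ev.toObj e
  · exact hx
  · exact List.mem_cons_of_mem _ hx

theorem sys_solo {p : Proc} : ∀ {π : List (Ev Proc Var Val Op Ret)} {s s' : SIState I},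
    LTSPath (SIStep I) s π s' → (∀ q, q ≠ p → s q = none) →
    (∀ x ∈ restrictObj π, ObjEv.proc x = p) →
    (∀ e ∈ π, Ev.proc e = p) ∧ (∀ q, q ≠ p → s' q = none) := by
  intro π
  induction π with
  | nil =>
    intro s s' h hnone _
    cases h; exact ⟨by simp, hnone⟩
  | cons e π ih =>
    intro s s' h hnone hobj
    cases h with
    | cons hst hrest =>
      obtain ⟨q, tq, hq, rfl⟩ := sistep_inv hst
      by_cases hqp : q = p
      · subst hqp
        have hnone' : ∀ q', q' ≠ q → (Function.update s q tq) q' = none := by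
          intro q' hq'
          rw [Function.update_of_ne hq' tq s]; exact hnone q' hq'
        have hih := ih hrest hnone' (fun x hx => hobj x (restrictObj_sublist_mem hx))
        refine ⟨?_, hih.2⟩
        intro e' he'
        rcases List.mem_cons.mp he' with rfl | h'
        · exact sip_proc hq
        · exact hih.1 e' h'
      · exfalso
        rw [hnone q hqp] at hq
        cases hq with
        | invoke o =>
          have : (⟨q, ObjAct.inv o⟩ : ObjEv Proc Op Ret) ∈
              restrictObj (⟨q, EvAct.inv o⟩ :: π) := by
            simp [restrictObj, List.filterMap_cons, Ev.toObj]
          exact hqp (hobj _ this)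

theorem sip_none_of_obj_nil {p : Proc} {π : List (Ev Proc Var Val Op Ret)}
    {t : SIPState I p} (h : LTSPath (SIPStep I p) none π t)
    (hobj : restrictObj π = []) : π = [] := by
  cases h with
  | nil => rfl
  | cons hst hrest =>
    cases hst with
    | invoke o => simp [restrictObj, List.filterMap_cons, Ev.toObj] at hobj

theorem sip_extract_run {p : Proc} {o : Op} {u : Ret} :
    ∀ {π : List (Ev Proc Var Val Op Ret)} {q : (I o p).State} {t : SIPState I p},
    LTSPath (SIPStep I p) (some ⟨o, q⟩) π t →
    restrictObj π = [⟨p, ObjAct.res u⟩] →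
    ∃ q', LTSPath (I o p).step q π q' := by
  intro π
  induction π with
  | nil => intro q t h hobj; simp [restrictObj] at hobj
  | cons e π ih =>
    intro q t h hobj
    cases h with
    | cons hst hrest =>
      cases hst with
      | memStep a hstep =>
        rw [show restrictObj (⟨p, EvAct.mem a⟩ :: π) = restrictObj π by
          simp [restrictObj, List.filterMap_cons, Ev.toObj]] at hobj
        obtain ⟨q'', hpath⟩ := ih hrest hobj
        exact ⟨q'', LTSPath.cons hstep hpath⟩
      | resStep u' hstep =>
        have hcons : (⟨p, ObjAct.res u'⟩ : ObjEv Proc Op Ret) :: restrictObj π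
            = [⟨p, ObjAct.res u⟩] := by
          simpa [restrictObj, List.filterMap_cons, Ev.toObj] using hobj
        have hu : u' = u := by
          have h1 := List.head_eq_of_cons_eq hcons
          injection h1 with _ h2
          injection h2
        have hπ : π = [] := sip_none_of_obj_nil hrest (by
          have := List.tail_eq_of_cons_eq hcons; simpa using this)
        subst hπ hu
        cases hrest
        exact ⟨_, LTSPath.cons hstep (LTSPath.nil _)⟩

theorem sip_extract {p : Proc} {o : Op} {u : Ret} {π : List (Ev Proc Var Val Op Ret)}
    {t : SIPState I p} (h : LTSPath (SIPStep I p) none π t)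
    (hobj : restrictObj π = [⟨p, ObjAct.inv o⟩, ⟨p, ObjAct.res u⟩]) :
    ∃ ρ q, π = ⟨p, EvAct.inv o⟩ :: ρ ∧ LTSPath (I o p).step (I o p).init ρ q := by
  cases π with
  | nil => simp [restrictObj] at hobj
  | cons e ρ =>
    cases h with
    | cons hst hrest =>
      cases hst with
      | invoke o' =>
        have hcons : (⟨p, ObjAct.inv o'⟩ : ObjEv Proc Op Ret) :: restrictObj ρ
            = [⟨p, ObjAct.inv o⟩, ⟨p, ObjAct.res u⟩] := by
          simpa [restrictObj, List.filterMap_cons, Ev.toObj] using hobj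
        have ho : o' = o := by
          have h1 := List.head_eq_of_cons_eq hcons
          injection h1 with _ h2
          injection h2
        subst ho
        obtain ⟨q', hpath⟩ := sip_extract_run hrest
          (by have := List.tail_eq_of_cons_eq hcons; simpa using this)
        exact ⟨ρ, q', rfl, hpath⟩

end SysAux
/-! ### History lemmas -/

section HistAux

set_option linter.unusedSectionVars false

variable {Proc Var Val Op Ret : Type} [DecidableEq Proc] {I : Impl Proc Var Val Op Ret}

theorem CompleteSeq.append_cs {A B : List (ObjEv Proc Op Ret)}
    (hA : CompleteSeq A) (hB : CompleteSeq B) : CompleteSeq (A ++ B) := by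
  induction hA with
  | nil => simpa using hB
  | cons p o u _ ih => exact CompleteSeq.cons p o u ih

theorem CompleteSeq.invres_cs (p : Proc) (o : Op) (u : Ret) :
    CompleteSeq (invres p o u) := CompleteSeq.cons p o u CompleteSeq.nil

theorem CompleteSeq.cons_inv {x : ObjEv Proc Op Ret} {R : List (ObjEv Proc Op Ret)}
    (h : CompleteSeq (x :: R)) :
    ∃ (o : Op) (u : Ret) (t : List (ObjEv Proc Op Ret)),
      x = ⟨x.proc, ObjAct.inv o⟩ ∧ R = ⟨x.proc, ObjAct.res u⟩ :: t ∧ CompleteSeq t := by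
  cases h with
  | cons p o u hcs => exact ⟨o, u, _, rfl, rfl, hcs⟩

theorem CompleteSeq.filter_cs {h : List (ObjEv Proc Op Ret)} (hcs : CompleteSeq h)
    (p : Proc) : CompleteSeq (h.filter (fun e => decide (e.proc = p))) := by
  induction hcs with
  | nil => exact CompleteSeq.nil
  | @cons q o u t _ ih =>
    by_cases hq : q = p
    · subst hq
      simpa [List.filter_cons] using CompleteSeq.cons q o u ih
    · simpa [List.filter_cons, hq] using ih

theorem CompleteSeq.last_res {l : List (ObjEv Proc Op Ret)} (h : CompleteSeq l) :
    l = [] ∨ ∃ e : ObjEv Proc Op Ret, l.getLast? = some e ∧ ObjAct.isRes e.act := by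
  induction h with
  | nil => exact Or.inl rfl
  | @cons p o u t _ ih =>
    right
    rcases ih with rfl | ⟨e, hl, hr⟩
    · exact ⟨⟨p, ObjAct.res u⟩, by simp, trivial⟩
    · have ht : t ≠ [] := by intro h0; subst h0; simp at hl
      obtain ⟨c, t', rfl⟩ := List.exists_cons_of_ne_nil ht
      exact ⟨e, by rw [List.getLast?_cons_cons, List.getLast?_cons_cons]; exact hl, hr⟩

theorem completeH_of_completeSeq {h : List (ObjEv Proc Op Ret)} (hcs : CompleteSeq h) :
    CompleteH h := by
  constructor
  · intro p
    exact ⟨h.filter (fun e => decide (e.proc = p)), hcs.filter_cs p, List.prefix_refl _⟩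
  · intro p
    rcases (hcs.filter_cs p).last_res with h0 | ⟨e, hl, hr⟩
    · exact Or.inl h0
    · exact Or.inr ⟨e, hl, hr⟩

theorem restrictObj_filter_comm (π : List (Ev Proc Var Val Op Ret)) (p : Proc) :
    restrictObj (π.filter (fun e => decide (Ev.proc e = p))) =
    (restrictObj π).filter (fun x => decide (ObjEv.proc x = p)) := by
  induction π with
  | nil => rfl
  | cons e π ih =>
    obtain ⟨q, act⟩ := e
    by_cases hq : q = p <;>
      cases act <;>
        simp_all [restrictObj, List.filter_cons, List.filterMap_cons, Ev.toObj]

/-- End state of a per-process path whose object projection is complete. -/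
theorem sip_complete_end {p : Proc} : ∀ {π : List (Ev Proc Var Val Op Ret)}
    {st t : SIPState I p}, LTSPath (SIPStep I p) st π t →
    ((st = none ∧ CompleteSeq (restrictObj π)) ∨
      ((∃ a, st = some a) ∧ ∃ (u : Ret) (h' : List (ObjEv Proc Op Ret)),
        restrictObj π = ⟨p, ObjAct.res u⟩ :: h' ∧ CompleteSeq h')) →
    t = none := by
  intro π
  induction π with
  | nil =>
    intro st t h hg
    cases h
    rcases hg with ⟨rfl, _⟩ | ⟨_, u, h', habs, _⟩
    · rfl
    · simp [restrictObj] at habs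
  | cons e π ih =>
    intro st t h hg
    cases h with
    | cons hst hrest =>
      cases hst with
      | invoke o =>
        rcases hg with ⟨_, hcs⟩ | ⟨⟨a, ha⟩, _⟩
        · rw [show restrictObj (⟨p, EvAct.inv o⟩ :: π)
              = ⟨p, ObjAct.inv o⟩ :: restrictObj π from by
            simp [restrictObj, List.filterMap_cons, Ev.toObj]] at hcs
          obtain ⟨o', u, t, _, hR, hcs'⟩ := hcs.cons_inv
          exact ih hrest (Or.inr ⟨⟨_, rfl⟩, u, t, hR, hcs'⟩)
        · simp at ha
      | memStep a hstep =>
        rcases hg with ⟨habs, _⟩ | ⟨_, u, h', hobj, hcs⟩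
        · simp at habs
        · rw [show restrictObj (⟨p, EvAct.mem a⟩ :: π) = restrictObj π from by
            simp [restrictObj, List.filterMap_cons, Ev.toObj]] at hobj
          exact ih hrest (Or.inr ⟨⟨_, rfl⟩, u, h', hobj, hcs⟩)
      | resStep u' hstep =>
        rcases hg with ⟨habs, _⟩ | ⟨_, u, h', hobj, hcs⟩
        · simp at habs
        · have : (⟨p, ObjAct.res u'⟩ : ObjEv Proc Op Ret) :: restrictObj π
              = ⟨p, ObjAct.res u⟩ :: h' := by
            simpa [restrictObj, List.filterMap_cons, Ev.toObj] using hobj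
          have hπ : restrictObj π = h' := List.tail_eq_of_cons_eq this
          exact ih hrest (Or.inl ⟨rfl, hπ ▸ hcs⟩)

theorem sys_end_none {π : List (Ev Proc Var Val Op Ret)} {s' : SIState I}
    (h : LTSPath (SIStep I) (fun _ => none) π s')
    (hobj : CompleteSeq (restrictObj π)) : s' = fun _ => none := by
  funext q
  have hp := sys_project h q
  refine sip_complete_end hp (Or.inl ⟨rfl, ?_⟩)
  rw [restrictObj_filter_comm]
  exact hobj.filter_cs q

/-! ### Rigidity of linearizations of complete sequential histories -/

theorem completeSeq_consec {h : List (ObjEv Proc Op Ret)} (hcs : CompleteSeq h) :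
    ∀ (i : ℕ) (hi : i + 1 < h.length),
      linRel (h[i]'(by omega)) (h[i+1]'hi) := by
  induction hcs with
  | nil => intro i hi; simp at hi
  | @cons p o u t hcs ih =>
    intro i hi
    match i with
    | 0 => exact Or.inl rfl
    | 1 =>
      refine Or.inr ⟨trivial, ?_⟩
      cases hcs with
      | nil => simp at hi
      | @cons p' o' u' t' hcs' => exact trivial
    | (n+2) =>
      have hn : n + 1 < t.length := by simp at hi; omega
      have := ih n hn
      simpa using this

theorem strictMono_fin_le {n n' : ℕ} {g : Fin n → Fin n'} (hg : StrictMono g) :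
    ∀ i : Fin n, (i : ℕ) ≤ (g i : ℕ) := by
  have key : ∀ (m : ℕ) (i : Fin n), (i : ℕ) = m → m ≤ (g i : ℕ) := by
    intro m
    induction m with
    | zero => intro i _; exact Nat.zero_le _
    | succ m ihm =>
      intro i hi
      have hm : m < n := by omega
      have hlt : (⟨m, hm⟩ : Fin n) < i := by simp [Fin.lt_def]; omega
      have h1 := hg hlt
      have h2 := ihm ⟨m, hm⟩ rfl
      rw [Fin.lt_def] at h1
      omega
  exact fun i => key (i : ℕ) i rfl

theorem reorder_completeSeq_eq {h h' : List (ObjEv Proc Op Ret)} (hcs : CompleteSeq h)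
    (hr : Reorder linRel h h') : h' = h := by
  obtain ⟨f, hget, hord⟩ := hr
  have hlen : h.length = h'.length := Fin.equiv_iff_eq.mp ⟨f⟩
  have hmono : StrictMono f := by
    have hsucc : ∀ (i : ℕ) (hi : i + 1 < h.length),
        f ⟨i, by omega⟩ < f ⟨i+1, hi⟩ := by
      intro i hi
      exact hord ⟨i, by omega⟩ ⟨i+1, hi⟩ (by simp [Fin.lt_def])
        (by simpa [List.get_eq_getElem] using completeSeq_consec hcs i hi)
    have hgen : ∀ (k : ℕ) (i j : Fin h.length), (j : ℕ) = (i : ℕ) + k + 1 → f i < f j := by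
      intro k
      induction k with
      | zero =>
        intro i j hj
        have hj1 : (i : ℕ) + 1 < h.length := by have := j.isLt; omega
        have hj2 : j = ⟨(i : ℕ) + 1, hj1⟩ := Fin.ext (by simpa using hj)
        rw [hj2]
        have := hsucc (i : ℕ) hj1
        simpa using this
      | succ k ihk =>
        intro i j hj
        have hmid : (i : ℕ) + k + 1 < h.length := by have := j.isLt; omega
        have h1 := ihk i ⟨(i : ℕ) + k + 1, hmid⟩ rfl
        have h2 : f ⟨(i : ℕ) + k + 1, hmid⟩ < f j := by
          have hj1 : (i : ℕ) + k + 1 + 1 < h.length := by have := j.isLt; omega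
          have hj2 : j = ⟨(i : ℕ) + k + 1 + 1, hj1⟩ := Fin.ext (by simp only [Fin.val_mk]; omega)
          rw [hj2]
          have := hsucc ((i : ℕ) + k + 1) hj1
          simpa using this
        exact h1.trans h2
    intro i j hij
    have : ∃ k, (j : ℕ) = (i : ℕ) + k + 1 := ⟨(j : ℕ) - (i : ℕ) - 1, by
      rw [Fin.lt_def] at hij; omega⟩
    obtain ⟨k, hk⟩ := this
    exact hgen k i j hk
  have hsymm : StrictMono (f.symm : Fin h'.length → Fin h.length) := by
    intro a b hab
    rw [← hmono.lt_iff_lt]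
    simpa using hab
  have hid : ∀ i : Fin h.length, ((f i : ℕ)) = (i : ℕ) := by
    intro i
    have h1 := strictMono_fin_le hmono i
    have h2 := strictMono_fin_le hsymm (f i)
    simp at h2
    omega
  apply List.ext_getElem hlen.symm
  intro i hi1 hi2
  have := hget ⟨i, hi2⟩
  simp only [List.get_eq_getElem] at this
  rw [← this]
  congr 1
  exact (hid ⟨i, hi2⟩).symm

end HistAux
/-! ### TSO constructions -/

section TSOAux

set_option linter.unusedSectionVars false

variable {Proc Var Val : Type} [DecidableEq Proc] [DecidableEq Var] [Zero Val]

def applyWrites (m : Var → Val) (l : List (Var × Val)) : Var → Val :=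
  l.foldl (fun m pr => Function.update m pr.1 pr.2) m

theorem applyWrites_concat (m : Var → Val) (l : List (Var × Val)) (y : Var) (v : Val) :
    applyWrites m (l ++ [(y, v)]) = Function.update (applyWrites m l) y v := by
  simp [applyWrites, List.foldl_append]

theorem buf_lookup (m : Var → Val) (l : List (Var × Val)) (x : Var) :
    ((l.filter (fun pr => decide (pr.1 = x))) = [] ∧ applyWrites m l x = m x) ∨
    ((l.filter (fun pr => decide (pr.1 = x))).getLast? = some (x, applyWrites m l x)) := by
  induction l using List.reverseRecOn with
  | nil => exact Or.inl ⟨rfl, rfl⟩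
  | append_singleton l pr ih =>
    obtain ⟨y, v⟩ := pr
    rw [applyWrites_concat, List.filter_append]
    by_cases hxy : y = x
    · subst hxy
      right
      have : List.filter (fun pr => decide (pr.1 = y)) [(y, v)] = [(y, v)] := by simp
      rw [this, Function.update_self]
      exact List.getLast?_concat
    · have h0 : List.filter (fun pr => decide (pr.1 = x)) [(y, v)] = [] := by simp [hxy]
      rw [h0, List.append_nil, Function.update_of_ne (fun h => hxy h.symm)]
      exact ih

theorem tso_eager {m m' : Var → Val} {σ : List (MemEv Proc Var Val)}
    (hσ : LTSPath (PStep (SCMStep Proc Var Val)) m σ m')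
    (B : Proc → List (Var × Val)) (hB : ∀ e ∈ σ, B (MemEv.proc e) = []) :
    OPath (TSOStep Proc Var Val) (m, B) σ (m', B) := by
  induction hσ with
  | nil => exact OPath.nil _
  | @cons m m1 m'' e σ hst hrest ih =>
    have hB' : ∀ e' ∈ σ, B (MemEv.proc e') = [] := fun e' he' => hB e' (by simp [he'])
    cases hst with
    | write p x v =>
      have hBe : B p = [] := hB _ (List.mem_cons_self)
      have h1 : TSOStep Proc Var Val (m, B) (some ⟨p, MemAct.write x v⟩)
          (m, Function.update B p [(x, v)]) := by
        have := TSOStep.write (Val := Val) m B p x v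
        simpa [hBe] using this
      have hBB : Function.update B p ([] : List (Var × Val)) = B := by
        rw [← hBe]; exact Function.update_eq_self p B
      have h2 : TSOStep Proc Var Val (m, Function.update B p [(x, v)]) none
          (Function.update m x v, B) := by
        have := TSOStep.propagate m (Function.update B p [(x, v)]) p x v [] (by simp)
        simpa [Function.update_idem, hBB] using this
      exact OPath.obs h1 (OPath.tau h2 (ih hB'))
    | read p x =>
      have hBe : B p = [] := hB _ (List.mem_cons_self)
      have hfil : (B p).filter (fun pr => decide (pr.1 = x)) = [] := by simp [hBe]
      exact OPath.obs (TSOStep.readMemory m B p x hfil) (ih hB')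
    | rmw p x vnew =>
      have hBe : B p = [] := hB _ (List.mem_cons_self)
      exact OPath.obs (TSOStep.rmw m B p x vnew hBe) (ih hB')
    | fence p =>
      have hBe : B p = [] := hB _ (List.mem_cons_self)
      exact OPath.obs (TSOStep.fence m B p hBe) (ih hB')

theorem tso_buffered {p : Proc} {B : Proc → List (Var × Val)} {m : Var → Val} :
    ∀ {σ : List (MemEv Proc Var Val)} {l : List (Var × Val)} {m' : Var → Val},
    LTSPath (PStep (SCMStep Proc Var Val)) (applyWrites m l) σ m' →
    (∀ e ∈ σ, MemEv.proc e = p) →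
    (∀ e ∈ σ, MemEv.isWrite e ∨ MemEv.isRead e) →
    ∃ l', OPath (TSOStep Proc Var Val) (m, Function.update B p l) σ
      (m, Function.update B p l') := by
  intro σ
  induction σ with
  | nil => intro l m' _ _ _; exact ⟨l, OPath.nil _⟩
  | cons e σ ih =>
    intro l m' h hp hrw
    have hp' : ∀ e' ∈ σ, MemEv.proc e' = p := fun e' he' => hp e' (by simp [he'])
    have hrw' : ∀ e' ∈ σ, MemEv.isWrite e' ∨ MemEv.isRead e' :=
      fun e' he' => hrw e' (by simp [he'])
    cases h with
    | cons hst hrest =>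
      cases hst with
      | write q x v =>
        have hq : q = p := hp _ (List.mem_cons_self)
        subst hq
        have h1 : TSOStep Proc Var Val (m, Function.update B q l)
            (some ⟨q, MemAct.write x v⟩)
            (m, Function.update B q (l ++ [(x, v)])) := by
          have := TSOStep.write m (Function.update B q l) q x v
          simpa [Function.update_idem] using this
        have hrest' : LTSPath (PStep (SCMStep Proc Var Val))
            (applyWrites m (l ++ [(x, v)])) σ m' := by
          rwa [applyWrites_concat]
        obtain ⟨l', hop⟩ := ih hrest' hp' hrw'
        exact ⟨l', OPath.obs h1 hop⟩
      | read q x =>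
        have hq : q = p := hp _ (List.mem_cons_self)
        subst hq
        rcases buf_lookup m l x with ⟨hfil, hval⟩ | hlast
        · have h1 : TSOStep Proc Var Val (m, Function.update B q l)
              (some ⟨q, MemAct.read x (applyWrites m l x)⟩)
              (m, Function.update B q l) := by
            rw [hval]
            exact TSOStep.readMemory m (Function.update B q l) q x (by simpa using hfil)
          obtain ⟨l', hop⟩ := ih hrest hp' hrw'
          exact ⟨l', OPath.obs h1 hop⟩
        · have h1 : TSOStep Proc Var Val (m, Function.update B q l)
              (some ⟨q, MemAct.read x (applyWrites m l x)⟩)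
              (m, Function.update B q l) :=
            TSOStep.readBuffer m (Function.update B q l) q x _ (by simpa using hlast)
          obtain ⟨l', hop⟩ := ih hrest hp' hrw'
          exact ⟨l', OPath.obs h1 hop⟩
      | rmw q x vnew =>
        exfalso
        rcases hrw _ (List.mem_cons_self) with hW | hR
        · obtain ⟨x', v', hact⟩ := hW; simp at hact
        · obtain ⟨x', v', hact⟩ := hR; simp at hact
      | fence q =>
        exfalso
        rcases hrw _ (List.mem_cons_self) with hW | hR
        · obtain ⟨x', v', hact⟩ := hW; simp at hact
        · obtain ⟨x', v', hact⟩ := hR; simp at hact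

end TSOAux
/-! ### RA constructions -/

section RAAux

set_option linter.unusedSectionVars false

variable {Proc Var Val : Type} [Fintype Proc] [DecidableEq Proc] [DecidableEq Var] [Zero Val]

def msgAt (s : RAState Proc Var Val) (x : Var) (v : Val) (t : ℕ) : Prop :=
  ∃ V, (⟨x, v, t, V⟩ : RAMsg Var Val) ∈ s.mem

/-- Flat (synchronized) invariant. -/
structure Flat (m : Var → Val) (T : Var → ℕ) (s : RAState Proc Var Val) : Prop where
  views : ∀ p, s.view p = T
  fv : ∀ x, s.fview x ≤ T x
  msg : ∀ x, msgAt s x (m x) (T x)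
  bound : ∀ μ ∈ s.mem, μ.time ≤ T μ.var

theorem ra_init_flat :
    Flat (fun _ => (0 : Val)) (fun _ => 0) (RAModel Proc Var Val).init := by
  refine ⟨fun p => rfl, fun x => le_refl 0, fun x => ⟨fun _ => 0, ?_⟩, ?_⟩
  · exact ⟨x, rfl⟩
  · rintro μ ⟨x, rfl⟩; exact le_refl 0

/-- Propagating a fresh flat message to every process. -/
theorem ra_sync (L : List Proc) :
    ∀ (s : RAState Proc Var Val) (T T' : Var → ℕ) (μ0 : RAMsg Var Val),
    μ0 ∈ s.mem → μ0.view = T' → (∀ x, T x ≤ T' x) → T μ0.var < μ0.time →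
    (∀ q, s.view q = T ∨ s.view q = T') → (∀ q, q ∉ L → s.view q = T') →
    ∃ s' : RAState Proc Var Val, OPath (RAStep Proc Var Val) s [] s' ∧
      s'.mem = s.mem ∧ s'.fview = s.fview ∧ (∀ q, s'.view q = T') := by
  induction L with
  | nil =>
    intro s T T' μ0 _ _ _ _ _ hout
    exact ⟨s, OPath.nil s, rfl, rfl, fun q => hout q (by simp)⟩
  | cons q L ih =>
    intro s T T' μ0 hμ hv hle ht hdisj hout
    rcases hdisj q with hq | hq
    · have hstep : RAStep Proc Var Val s none
          ⟨s.mem, Function.update s.view q (viewJoin (s.view q) μ0.view), s.fview⟩ :=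
        RAStep.propagate s q μ0 hμ (by rw [hq]; exact ht)
      have hjoin : viewJoin (s.view q) μ0.view = T' := by
        funext y
        simp only [viewJoin, hq, hv]
        exact Nat.max_eq_right (hle y)
      set s1 : RAState Proc Var Val :=
        ⟨s.mem, Function.update s.view q (viewJoin (s.view q) μ0.view), s.fview⟩ with hs1
      have hdisj1 : ∀ q', s1.view q' = T ∨ s1.view q' = T' := by
        intro q'
        by_cases h : q' = q
        · subst h; right; simp [hs1, hjoin]
        · simp only [hs1, Function.update_of_ne h]; exact hdisj q'
      have hout1 : ∀ q', q' ∉ L → s1.view q' = T' := by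
        intro q' hq'
        by_cases h : q' = q
        · subst h; simp [hs1, hjoin]
        · simp only [hs1, Function.update_of_ne h]
          exact hout q' (by simp [h, hq'])
      obtain ⟨s', hp, hm, hf, hv'⟩ := ih s1 T T' μ0 hμ hv hle ht hdisj1 hout1
      exact ⟨s', OPath.tau hstep hp, hm, hf, hv'⟩
    · refine ih s T T' μ0 hμ hv hle ht hdisj ?_
      intro q' hq'
      by_cases h : q' = q
      · subst h; exact hq
      · exact hout q' (by simp [h, hq'])

/-- Flat replay of an arbitrary SCM run. -/
theorem ra_flat {m m' : Var → Val} {σ : List (MemEv Proc Var Val)}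
    (hσ : LTSPath (PStep (SCMStep Proc Var Val)) m σ m') :
    ∀ (s : RAState Proc Var Val) (T : Var → ℕ), Flat m T s →
    ∃ (s' : RAState Proc Var Val) (T' : Var → ℕ),
      OPath (RAStep Proc Var Val) s σ s' ∧ Flat m' T' s' := by
  induction hσ with
  | nil => exact fun s T hF => ⟨s, T, OPath.nil s, hF⟩
  | @cons m m1 m'' e σ hst hrest ih =>
    intro s T hF
    cases hst with
    | write p x v =>
      set T' := Function.update T x (T x + 1) with hT'
      have hvx : s.view p x < T x + 1 := by rw [hF.views p]; omega
      have hfresh : ∀ μ ∈ s.mem, μ.var = x → μ.time ≠ T x + 1 := by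
        intro μ hμ hvar
        have hb := hF.bound μ hμ
        rw [hvar] at hb; omega
      have hstep := RAStep.write s p x v (T x + 1) hvx hfresh
      rw [hF.views p] at hstep
      set s1 : RAState Proc Var Val :=
        ⟨insert ⟨x, v, T x + 1, T'⟩ s.mem, Function.update s.view p T', s.fview⟩ with hs1
      have hle : ∀ y, T y ≤ T' y := by
        intro y; by_cases h : y = x
        · subst h; simp [hT']
        · simp [hT', Function.update_of_ne h]
      obtain ⟨s2, htau, hm2, hf2, hv2⟩ := ra_sync (Finset.univ : Finset Proc).toList s1 T T'
        ⟨x, v, T x + 1, T'⟩ (by simp [hs1]) rfl hle (by simp [hT'])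
        (by
          intro q
          by_cases h : q = p
          · subst h; right; simp [hs1]
          · left; simp only [hs1, Function.update_of_ne h]; exact hF.views q)
        (by intro q hq; exact absurd (by simp [Finset.mem_toList]) hq)
      have hFlat2 : Flat (Function.update m x v) T' s2 := by
        refine ⟨hv2, ?_, ?_, ?_⟩
        · intro y
          rw [hf2]
          exact le_trans (hF.fv y) (hle y)
        · intro y
          by_cases h : y = x
          · subst h
            refine ⟨T', ?_⟩
            rw [hm2]
            simp [hs1, hT']
          · obtain ⟨V, hV⟩ := hF.msg y
            refine ⟨V, ?_⟩
            rw [hm2]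
            simp only [hs1, Function.update_of_ne h, hT']
            exact Set.mem_insert_of_mem _ hV
        · intro μ hμ
          rw [hm2] at hμ
          simp only [hs1, Set.mem_insert_iff] at hμ
          rcases hμ with rfl | hμ
          · simp [hT']
          · exact le_trans (hF.bound μ hμ) (hle μ.var)
      obtain ⟨s', T'', hpath, hF'⟩ := ih s2 T' hFlat2
      refine ⟨s', T'', OPath.obs hstep ?_, hF'⟩
      have := OPath.append_opath htau hpath
      simpa using this
    | read p x =>
      obtain ⟨V, hV⟩ := hF.msg x
      have hstep := RAStep.read s p x (m x) V (by rw [hF.views p]; exact hV)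
      obtain ⟨s', T'', hpath, hF'⟩ := ih s T hF
      exact ⟨s', T'', OPath.obs hstep hpath, hF'⟩
    | rmw p x vnew =>
      set T' := Function.update T x (T x + 1) with hT'
      obtain ⟨V, hV⟩ := hF.msg x
      have hfresh : ∀ μ ∈ s.mem, μ.var = x → μ.time ≠ s.view p x + 1 := by
        intro μ hμ hvar
        have hb := hF.bound μ hμ
        rw [hvar] at hb
        rw [hF.views p]
        omega
      have hstep := RAStep.rmw s p x (m x) vnew V (by rw [hF.views p]; exact hV) hfresh
      rw [hF.views p] at hstep
      set s1 : RAState Proc Var Val :=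
        ⟨insert ⟨x, vnew, T x + 1, T'⟩ s.mem, Function.update s.view p T', s.fview⟩ with hs1
      have hle : ∀ y, T y ≤ T' y := by
        intro y; by_cases h : y = x
        · subst h; simp [hT']
        · simp [hT', Function.update_of_ne h]
      obtain ⟨s2, htau, hm2, hf2, hv2⟩ := ra_sync (Finset.univ : Finset Proc).toList s1 T T'
        ⟨x, vnew, T x + 1, T'⟩ (by simp [hs1]) rfl hle (by simp [hT'])
        (by
          intro q
          by_cases h : q = p
          · subst h; right; simp [hs1]
          · left; simp only [hs1, Function.update_of_ne h]; exact hF.views q)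
        (by intro q hq; exact absurd (by simp [Finset.mem_toList]) hq)
      have hFlat2 : Flat (Function.update m x vnew) T' s2 := by
        refine ⟨hv2, ?_, ?_, ?_⟩
        · intro y
          rw [hf2]
          exact le_trans (hF.fv y) (hle y)
        · intro y
          by_cases h : y = x
          · subst h
            refine ⟨T', ?_⟩
            rw [hm2]
            simp [hs1, hT']
          · obtain ⟨V', hV'⟩ := hF.msg y
            refine ⟨V', ?_⟩
            rw [hm2]
            simp only [hs1, Function.update_of_ne h, hT']
            exact Set.mem_insert_of_mem _ hV'
        · intro μ hμ
          rw [hm2] at hμ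
          simp only [hs1, Set.mem_insert_iff] at hμ
          rcases hμ with rfl | hμ
          · simp [hT']
          · exact le_trans (hF.bound μ hμ) (hle μ.var)
      obtain ⟨s', T'', hpath, hF'⟩ := ih s2 T' hFlat2
      refine ⟨s', T'', OPath.obs hstep ?_, hF'⟩
      have := OPath.append_opath htau hpath
      simpa using this
    | fence p =>
      have hstep := RAStep.fence s p
      have hjoin : viewJoin (s.view p) s.fview = T := by
        funext y
        simp only [viewJoin, hF.views p]
        exact Nat.max_eq_left (hF.fv y)
      have hFlat1 : Flat m T (⟨s.mem, Function.update s.view p (viewJoin (s.view p) s.fview),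
          viewJoin (s.view p) s.fview⟩ : RAState Proc Var Val) := by
        refine ⟨?_, ?_, hF.msg, hF.bound⟩
        · intro q
          by_cases h : q = p
          · subst h; simp [hjoin]
          · simp only [Function.update_of_ne h]; exact hF.views q
        · intro y; rw [hjoin]
      obtain ⟨s', T'', hpath, hF'⟩ := ih _ T hFlat1
      exact ⟨s', T'', OPath.obs hstep hpath, hF'⟩

end RAAux
/-- Consecutive single-process replay invariant. -/
structure ConsInv {Proc Var Val : Type} (p : Proc) (m : Var → Val) (T : Var → ℕ) (n : ℕ)
    (s : RAState Proc Var Val) : Prop where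
  vp : s.view p = T
  fv : ∀ x, s.fview x ≤ T x
  msg : ∀ x, msgAt s x (m x) (T x)
  gap : ∀ μ ∈ s.mem, μ.time ≤ T μ.var ∨ T μ.var + n < μ.time

section RAAux2

set_option linter.unusedSectionVars false

variable {Proc Var Val : Type} [Fintype Proc] [DecidableEq Proc] [DecidableEq Var] [Zero Val]

theorem ra_cons {p : Proc} :
    ∀ {σ : List (MemEv Proc Var Val)} {m m' : Var → Val} {n : ℕ},
    LTSPath (PStep (SCMStep Proc Var Val)) m σ m' →
    (∀ e ∈ σ, MemEv.proc e = p) → σ.length ≤ n →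
    ∀ (s : RAState Proc Var Val) (T : Var → ℕ), ConsInv p m T n s →
    ∃ (s' : RAState Proc Var Val) (T' : Var → ℕ),
      OPath (RAStep Proc Var Val) s σ s' ∧
      (∀ q, q ≠ p → s'.view q = s.view q) ∧
      s.mem ⊆ s'.mem ∧
      (∀ μ ∈ s'.mem, μ ∈ s.mem ∨ μ.time ≤ T' μ.var) ∧
      (∀ x, T x ≤ T' x ∧ T' x ≤ T x + σ.length) := by
  intro σ
  induction σ with
  | nil =>
    intro m m' n h _ _ s T hC
    cases h
    exact ⟨s, T, OPath.nil s, fun q _ => rfl, subset_rfl,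
      fun μ hμ => Or.inl hμ, fun x => ⟨le_refl _, by omega⟩⟩
  | cons e σ ih =>
    intro m m' n h hp hn s T hC
    have hn1 : 1 ≤ n := by have := (List.length_cons (a := e) (as := σ)) ▸ hn; omega
    have hp' : ∀ e' ∈ σ, MemEv.proc e' = p := fun e' he' => hp e' (by simp [he'])
    have hn' : σ.length ≤ n - 1 := by simp at hn; omega
    cases h with
    | cons hst hrest =>
      cases hst with
      | write q x v =>
        have hq : q = p := hp _ (List.mem_cons_self)
        subst hq
        set T' := Function.update T x (T x + 1) with hT'
        have hfresh : ∀ μ ∈ s.mem, μ.var = x → μ.time ≠ T x + 1 := by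
          intro μ hμ hvar
          rcases hC.gap μ hμ with hle | hgt <;> rw [hvar] at * <;> omega
        have hstep := RAStep.write s q x v (T x + 1) (by rw [hC.vp]; omega) hfresh
        rw [hC.vp] at hstep
        set s1 : RAState Proc Var Val :=
          ⟨insert ⟨x, v, T x + 1, T'⟩ s.mem, Function.update s.view q T', s.fview⟩ with hs1
        have hle : ∀ y, T y ≤ T' y := by
          intro y; by_cases hy : y = x
          · subst hy; simp [hT']
          · simp [hT', Function.update_of_ne hy]
        have hle1 : ∀ y, T' y ≤ T y + 1 := by
          intro y; by_cases hy : y = x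
          · subst hy; simp [hT']
          · simp [hT', Function.update_of_ne hy]
        have hC1 : ConsInv q (Function.update m x v) T' (n - 1) s1 := by
          refine ⟨by simp [hs1], ?_, ?_, ?_⟩
          · intro y; exact le_trans (hC.fv y) (hle y)
          · intro y
            by_cases hy : y = x
            · subst hy; exact ⟨T', by simp [hs1, hT']⟩
            · obtain ⟨V, hV⟩ := hC.msg y
              refine ⟨V, ?_⟩
              simp only [hs1, Function.update_of_ne hy, hT']
              exact Set.mem_insert_of_mem _ hV
          · intro μ hμ
            simp only [hs1, Set.mem_insert_iff] at hμ
            rcases hμ with rfl | hμ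
            · left; simp [hT']
            · rcases hC.gap μ hμ with h1 | h1
              · left; exact le_trans h1 (hle μ.var)
              · right; have := hle1 μ.var; omega
        obtain ⟨s', T'', hpath, hview, hsub, hnew, hTT⟩ := ih hrest hp' hn' s1 T' hC1
        refine ⟨s', T'', OPath.obs hstep hpath, ?_, ?_, ?_, ?_⟩
        · intro q' hq'
          rw [hview q' hq']
          simp [hs1, Function.update_of_ne hq']
        · intro μ hμ
          exact hsub (by simp [hs1]; exact Or.inr hμ)
        · intro μ hμ
          rcases hnew μ hμ with h1 | h1
          · simp only [hs1, Set.mem_insert_iff] at h1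
            rcases h1 with rfl | h1
            · right
              simp only
              have := (hTT x).1
              simp [hT'] at this
              omega
            · exact Or.inl h1
          · exact Or.inr h1
        · intro y
          have h1 := hTT y
          have h2 := hle y
          have h3 := hle1 y
          simp only [List.length_cons]
          omega
      | read q x =>
        have hq : q = p := hp _ (List.mem_cons_self)
        subst hq
        obtain ⟨V, hV⟩ := hC.msg x
        have hstep := RAStep.read s q x (m x) V (by rw [hC.vp]; exact hV)
        have hC' : ConsInv q m T (n - 1) s := by
          exact ⟨hC.vp, hC.fv, hC.msg, by
            intro μ hμ
            rcases hC.gap μ hμ with h1 | h1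
            · exact Or.inl h1
            · right; omega⟩
        obtain ⟨s', T'', hpath, hview, hsub, hnew, hTT⟩ := ih hrest hp' hn' s T hC'
        refine ⟨s', T'', OPath.obs hstep hpath, hview, hsub, hnew, ?_⟩
        intro y
        have := hTT y
        simp only [List.length_cons]
        omega
      | rmw q x vnew =>
        have hq : q = p := hp _ (List.mem_cons_self)
        subst hq
        set T' := Function.update T x (T x + 1) with hT'
        obtain ⟨V, hV⟩ := hC.msg x
        have hfresh : ∀ μ ∈ s.mem, μ.var = x → μ.time ≠ s.view q x + 1 := by
          intro μ hμ hvar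
          rw [hC.vp]
          rcases hC.gap μ hμ with hle | hgt <;> rw [hvar] at * <;> omega
        have hstep := RAStep.rmw s q x (m x) vnew V (by rw [hC.vp]; exact hV) hfresh
        rw [hC.vp] at hstep
        set s1 : RAState Proc Var Val :=
          ⟨insert ⟨x, vnew, T x + 1, T'⟩ s.mem, Function.update s.view q T', s.fview⟩ with hs1
        have hle : ∀ y, T y ≤ T' y := by
          intro y; by_cases hy : y = x
          · subst hy; simp [hT']
          · simp [hT', Function.update_of_ne hy]
        have hle1 : ∀ y, T' y ≤ T y + 1 := by
          intro y; by_cases hy : y = x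
          · subst hy; simp [hT']
          · simp [hT', Function.update_of_ne hy]
        have hC1 : ConsInv q (Function.update m x vnew) T' (n - 1) s1 := by
          refine ⟨by simp [hs1], ?_, ?_, ?_⟩
          · intro y; exact le_trans (hC.fv y) (hle y)
          · intro y
            by_cases hy : y = x
            · subst hy; exact ⟨T', by simp [hs1, hT']⟩
            · obtain ⟨V', hV'⟩ := hC.msg y
              refine ⟨V', ?_⟩
              simp only [hs1, Function.update_of_ne hy, hT']
              exact Set.mem_insert_of_mem _ hV'
          · intro μ hμ
            simp only [hs1, Set.mem_insert_iff] at hμ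
            rcases hμ with rfl | hμ
            · left; simp [hT']
            · rcases hC.gap μ hμ with h1 | h1
              · left; exact le_trans h1 (hle μ.var)
              · right; have := hle1 μ.var; omega
        obtain ⟨s', T'', hpath, hview, hsub, hnew, hTT⟩ := ih hrest hp' hn' s1 T' hC1
        refine ⟨s', T'', OPath.obs hstep hpath, ?_, ?_, ?_, ?_⟩
        · intro q' hq'
          rw [hview q' hq']
          simp [hs1, Function.update_of_ne hq']
        · intro μ hμ
          exact hsub (by simp [hs1]; exact Or.inr hμ)
        · intro μ hμ
          rcases hnew μ hμ with h1 | h1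
          · simp only [hs1, Set.mem_insert_iff] at h1
            rcases h1 with rfl | h1
            · right
              simp only
              have := (hTT x).1
              simp [hT'] at this
              omega
            · exact Or.inl h1
          · exact Or.inr h1
        · intro y
          have h1 := hTT y
          have h2 := hle y
          have h3 := hle1 y
          simp only [List.length_cons]
          omega
      | fence q =>
        have hq : q = p := hp _ (List.mem_cons_self)
        subst hq
        have hstep := RAStep.fence s q
        have hjoin : viewJoin (s.view q) s.fview = T := by
          funext y
          simp only [viewJoin, hC.vp]
          exact Nat.max_eq_left (hC.fv y)
        set s1 : RAState Proc Var Val :=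
          ⟨s.mem, Function.update s.view q (viewJoin (s.view q) s.fview),
            viewJoin (s.view q) s.fview⟩ with hs1
        have hC1 : ConsInv q m T (n - 1) s1 := by
          refine ⟨by simp [hs1, hjoin], by intro y; simp [hs1, hjoin], hC.msg, ?_⟩
          intro μ hμ
          rcases hC.gap μ hμ with h1 | h1
          · exact Or.inl h1
          · right; omega
        obtain ⟨s', T'', hpath, hview, hsub, hnew, hTT⟩ := ih hrest hp' hn' s1 T hC1
        refine ⟨s', T'', OPath.obs hstep hpath, ?_, hsub, hnew, ?_⟩
        · intro q' hq'
          rw [hview q' hq']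
          simp [hs1, Function.update_of_ne hq']
        · intro y
          have := hTT y
          simp only [List.length_cons]
          omega

end RAAux2

/-- High-timestamp single-process replay invariant. -/
structure HighInv {Proc Var Val : Type} (p : Proc) (m : Var → Val) (T Bd : Var → ℕ)
    (s : RAState Proc Var Val) : Prop where
  vp : s.view p = T
  msg : ∀ x, msgAt s x (m x) (T x)
  bound : ∀ μ ∈ s.mem, μ.time ≤ Bd μ.var
  TleB : ∀ x, T x ≤ Bd x

section RAAux3

set_option linter.unusedSectionVars false

variable {Proc Var Val : Type} [Fintype Proc] [DecidableEq Proc] [DecidableEq Var] [Zero Val]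

theorem ra_high {p : Proc} :
    ∀ {σ : List (MemEv Proc Var Val)} {m m' : Var → Val},
    LTSPath (PStep (SCMStep Proc Var Val)) m σ m' →
    (∀ e ∈ σ, MemEv.proc e = p) →
    (∀ e ∈ σ, MemEv.isWrite e ∨ MemEv.isRead e) →
    ∀ (s : RAState Proc Var Val) (T Bd : Var → ℕ), HighInv p m T Bd s →
    ∃ (s' : RAState Proc Var Val),
      OPath (RAStep Proc Var Val) s σ s' ∧
      (∀ q, q ≠ p → s'.view q = s.view q) ∧
      s'.fview = s.fview ∧ s.mem ⊆ s'.mem ∧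
      (∀ μ ∈ s'.mem, μ ∈ s.mem ∨ Bd μ.var < μ.time) := by
  intro σ
  induction σ with
  | nil =>
    intro m m' h _ _ s T Bd hH
    cases h
    exact ⟨s, OPath.nil s, fun q _ => rfl, rfl, subset_rfl, fun μ hμ => Or.inl hμ⟩
  | cons e σ ih =>
    intro m m' h hp hrw s T Bd hH
    have hp' : ∀ e' ∈ σ, MemEv.proc e' = p := fun e' he' => hp e' (by simp [he'])
    have hrw' : ∀ e' ∈ σ, MemEv.isWrite e' ∨ MemEv.isRead e' :=
      fun e' he' => hrw e' (by simp [he'])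
    cases h with
    | cons hst hrest =>
      cases hst with
      | write q x v =>
        have hq : q = p := hp _ (List.mem_cons_self)
        subst hq
        set T' := Function.update T x (Bd x + 1) with hT'
        have hfresh : ∀ μ ∈ s.mem, μ.var = x → μ.time ≠ Bd x + 1 := by
          intro μ hμ hvar
          have := hH.bound μ hμ
          rw [hvar] at this; omega
        have hstep := RAStep.write s q x v (Bd x + 1)
          (by rw [hH.vp]; have := hH.TleB x; omega) hfresh
        rw [hH.vp] at hstep
        set s1 : RAState Proc Var Val :=
          ⟨insert ⟨x, v, Bd x + 1, T'⟩ s.mem, Function.update s.view q T', s.fview⟩ with hs1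
        have hH1 : HighInv q (Function.update m x v) T' (fun y => Bd y + 1) s1 := by
          refine ⟨by simp [hs1], ?_, ?_, ?_⟩
          · intro y
            by_cases hy : y = x
            · subst hy; exact ⟨T', by simp [hs1, hT']⟩
            · obtain ⟨V, hV⟩ := hH.msg y
              refine ⟨V, ?_⟩
              simp only [hs1, Function.update_of_ne hy, hT']
              exact Set.mem_insert_of_mem _ hV
          · intro μ hμ
            simp only [hs1, Set.mem_insert_iff] at hμ
            rcases hμ with rfl | hμ
            · simp
            · have := hH.bound μ hμ; omega
          · intro y
            by_cases hy : y = x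
            · subst hy; simp [hT']
            · simp only [hT', Function.update_of_ne hy]
              have := hH.TleB y; omega
        obtain ⟨s', hpath, hview, hfv, hsub, hnew⟩ := ih hrest hp' hrw' s1 T' _ hH1
        refine ⟨s', OPath.obs hstep hpath, ?_, ?_, ?_, ?_⟩
        · intro q' hq'
          rw [hview q' hq']
          simp [hs1, Function.update_of_ne hq']
        · rw [hfv]
        · intro μ hμ
          exact hsub (by simp [hs1]; exact Or.inr hμ)
        · intro μ hμ
          rcases hnew μ hμ with h1 | h1
          · simp only [hs1, Set.mem_insert_iff] at h1
            rcases h1 with rfl | h1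
            · right; simp
            · exact Or.inl h1
          · right; omega
      | read q x =>
        have hq : q = p := hp _ (List.mem_cons_self)
        subst hq
        obtain ⟨V, hV⟩ := hH.msg x
        have hstep := RAStep.read s q x (m x) V (by rw [hH.vp]; exact hV)
        obtain ⟨s', hpath, hview, hfv, hsub, hnew⟩ := ih hrest hp' hrw' s T Bd hH
        exact ⟨s', OPath.obs hstep hpath, hview, hfv, hsub, hnew⟩
      | rmw q x vnew =>
        exfalso
        rcases hrw _ (List.mem_cons_self) with hW | hR
        · obtain ⟨x', v', hact⟩ := hW; simp at hact
        · obtain ⟨x', v', hact⟩ := hR; simp at hact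
      | fence q =>
        exfalso
        rcases hrw _ (List.mem_cons_self) with hW | hR
        · obtain ⟨x', v', hact⟩ := hW; simp at hact
        · obtain ⟨x', v', hact⟩ := hR; simp at hact

theorem ra_fences : ∀ (σ : List (MemEv Proc Var Val)), (∀ e ∈ σ, MemEv.isFence e) →
    ∀ s : RAState Proc Var Val, ∃ s', OPath (RAStep Proc Var Val) s σ s' := by
  intro σ
  induction σ with
  | nil => exact fun _ s => ⟨s, OPath.nil s⟩
  | cons e σ ih =>
    intro hF s
    obtain ⟨q, act⟩ := e
    have hact : act = MemAct.fence := hF _ (List.mem_cons_self)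
    subst hact
    obtain ⟨s', hpath⟩ := ih (fun e' he' => hF e' (by simp [he'])) _
    exact ⟨s', OPath.obs (RAStep.fence s q) hpath⟩

end RAAux3
/-! ### Pattern lemmas -/

section PatAux

set_option linter.unusedSectionVars false

variable {Proc Var Val Op Ret : Type}

theorem mem_act_cases (a : MemAct Var Val) :
    (∃ x v, a = MemAct.write x v) ∨ (∃ x v, a = MemAct.read x v) ∨
    (∃ x v w, a = MemAct.rmw x v w) ∨ a = MemAct.fence := by
  cases a with
  | write x v => exact Or.inl ⟨x, v, rfl⟩
  | read x v => exact Or.inr (Or.inl ⟨x, v, rfl⟩)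
  | rmw x v w => exact Or.inr (Or.inr (Or.inl ⟨x, v, w, rfl⟩))
  | fence => exact Or.inr (Or.inr (Or.inr rfl))

theorem not_isRW_of_mem {σ : List (MemEv Proc Var Val)} {e : MemEv Proc Var Val}
    (he : e ∈ σ) (h : MemEv.isFence e ∨ MemEv.isRMW e) : ¬ IsRW σ := by
  intro hRW
  rcases hRW e he with ⟨x, v, hw⟩ | ⟨x, v, hr⟩ <;>
    rcases h with hf | ⟨x', v', w', hm⟩ <;> simp_all [MemEv.isFence]

theorem fence_or_rmw_of_not_isRW {σ : List (MemEv Proc Var Val)} (h : ¬ IsRW σ) :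
    ∃ e ∈ σ, MemEv.isFence e ∨ MemEv.isRMW e := by
  by_contra hc
  push_neg at hc
  apply h
  intro e he
  rcases mem_act_cases e.act with ⟨x, v, ha⟩ | ⟨x, v, ha⟩ | ⟨x, v, w, ha⟩ | ha
  · exact Or.inl ⟨x, v, ha⟩
  · exact Or.inr ⟨x, v, ha⟩
  · exact absurd ⟨x, v, w, ha⟩ (hc e he).2
  · exact absurd ha (hc e he).1

theorem isTF_of_no_fence {σ : List (MemEv Proc Var Val)}
    (h : ∀ e ∈ σ, ¬ MemEv.isFence e) : IsTF σ := by
  intro k e e' hk _ hf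
  exact absurd hf (h e (List.mem_of_getElem? hk))

theorem isLF_of_all_fence {σ : List (MemEv Proc Var Val)}
    (h : ∀ e ∈ σ, MemEv.isFence e) : IsLF σ := by
  intro k e e' hk _ _
  exact h e (List.mem_of_getElem? hk)

theorem isTF_concat {w f : List (MemEv Proc Var Val)}
    (hw : ∀ e ∈ w, ¬ MemEv.isFence e) (hf : ∀ e ∈ f, MemEv.isFence e) :
    IsTF (w ++ f) := by
  intro k e e' hk hk' hfe
  have hkw : w.length ≤ k := by
    by_contra hlt
    push_neg at hlt
    rw [List.getElem?_append_left hlt] at hk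
    exact hw e (List.mem_of_getElem? hk) hfe
  rw [List.getElem?_append_right (by omega)] at hk'
  exact hf e' (List.mem_of_getElem? hk')

theorem tf_fences_after {σ w R : List (MemEv Proc Var Val)} {e0 : MemEv Proc Var Val}
    (hTF : IsTF σ) (hσ : σ = w ++ e0 :: R) (hf : MemEv.isFence e0) :
    ∀ e ∈ R, MemEv.isFence e := by
  subst hσ
  have key : ∀ i (hi : w.length + i < (w ++ e0 :: R).length),
      MemEv.isFence ((w ++ e0 :: R)[w.length + i]'hi) := by
    intro i
    induction i with
    | zero =>
      intro hi
      have : (w ++ e0 :: R)[w.length]'(by simp) = e0 := by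
        rw [List.getElem_append_right (le_refl _)]
        simp
      simpa [this] using hf
    | succ i ihi =>
      intro hi
      have hi' : w.length + i < (w ++ e0 :: R).length := by omega
      have h1 := ihi hi'
      have h2 := hTF (w.length + i) _ _ (List.getElem?_eq_getElem hi')
        (by rw [show w.length + i + 1 = w.length + (i + 1) by omega]
            exact List.getElem?_eq_getElem hi) h1
      exact h2
  intro e he
  obtain ⟨j, hj, hje⟩ := List.mem_iff_getElem.mp he
  have hj' : w.length + (j + 1) < (w ++ e0 :: R).length := by simp; omega
  have : (w ++ e0 :: R)[w.length + (j + 1)]'hj' = e := by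
    rw [List.getElem_append_right (by omega)]
    simp only [show w.length + (j + 1) - w.length = j + 1 by omega]
    simpa using hje
  rw [← this]
  exact key (j + 1) hj'

theorem ltf_first_fence_tf {σ w R : List (MemEv Proc Var Val)} {e0 : MemEv Proc Var Val}
    (hLTF : IsLTF σ) (hσ : σ = w ++ e0 :: R) (hw : ∀ x ∈ w, ¬ MemEv.isFence x)
    (hf : MemEv.isFence e0) (hne : w ≠ []) : IsTF σ := by
  obtain ⟨δ, δ', hδ, hLF, hTF⟩ := hLTF
  by_cases hlen : w.length < δ.length
  · exfalso
    have hwpos : 0 < w.length := List.length_pos_iff.mpr hne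
    -- σ[w.length] = e0 is a fence inside δ; LF forces σ[w.length - 1] to be a fence
    have he0 : σ[w.length]? = some e0 := by
      rw [hσ, List.getElem?_append_right (le_refl _)]
      simp
    have he0' : δ[w.length]? = some e0 := by
      rw [hδ] at he0
      rwa [List.getElem?_append_left hlen] at he0
    have hprev : δ[w.length - 1]? = some (w[w.length - 1]'(by omega)) := by
      have : σ[w.length - 1]? = some (w[w.length - 1]'(by omega)) := by
        rw [hσ, List.getElem?_append_left (by omega)]
        exact List.getElem?_eq_getElem (by omega)
      rw [hδ] at this
      rwa [List.getElem?_append_left (by omega)] at this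
    have := hLF (w.length - 1) _ _ hprev
      (by rw [show w.length - 1 + 1 = w.length by omega]; exact he0') hf
    exact hw _ (List.getElem_mem _) this
  · push_neg at hlen
    -- δ is fence-free (it sits inside w), so σ is trailing-fence via δ'
    intro k e e' hk hk' hfe
    have hkw : w.length ≤ k := by
      by_contra hlt
      push_neg at hlt
      rw [hσ, List.getElem?_append_left hlt] at hk
      exact hw e (List.mem_of_getElem? hk) hfe
    have hkδ : δ.length ≤ k := le_trans hlen hkw
    rw [hδ, List.getElem?_append_right hkδ] at hk
    rw [hδ, List.getElem?_append_right (by omega)] at hk'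
    have := hTF (k - δ.length) e e' hk
      (by rw [show k - δ.length + 1 = k + 1 - δ.length by omega]; exact hk') hfe
    exact this

theorem exists_first {α : Type u} (P : α → Prop) :
    ∀ (l : List α), (∃ e ∈ l, P e) →
    ∃ A a B, l = A ++ a :: B ∧ P a ∧ ∀ x ∈ A, ¬ P x := by
  classical
  intro l
  induction l with
  | nil => simp
  | cons e l ih =>
    intro h
    by_cases he : P e
    · exact ⟨[], e, l, rfl, he, by simp⟩
    · have h' : ∃ e' ∈ l, P e' := by
        obtain ⟨e', he', hf⟩ := h
        rcases List.mem_cons.mp he' with rfl | hmem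
        · exact absurd hf he
        · exact ⟨e', hmem, hf⟩
      obtain ⟨A, a, B, hπ, ha, hA⟩ := ih h'
      refine ⟨e :: A, a, B, by rw [hπ]; rfl, ha, ?_⟩
      intro x hx
      rcases List.mem_cons.mp hx with rfl | hmem
      · exact he
      · exact hA x hmem

theorem exists_first_fence {π : List (Ev Proc Var Val Op Ret)}
    (h : ∃ e ∈ π, Ev.isFenceEv e) :
    ∃ A a B, π = A ++ a :: B ∧ Ev.isFenceEv a ∧ ∀ x ∈ A, ¬ Ev.isFenceEv x := by
  classical
  induction π with
  | nil => simp at h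
  | cons e π ih =>
    by_cases he : Ev.isFenceEv e
    · exact ⟨[], e, π, rfl, he, by simp⟩
    · have h' : ∃ e' ∈ π, Ev.isFenceEv e' := by
        obtain ⟨e', he', hf⟩ := h
        rcases List.mem_cons.mp he' with rfl | hmem
        · exact absurd hf he
        · exact ⟨e', hmem, hf⟩
      obtain ⟨A, a, B, hπ, ha, hA⟩ := ih h'
      refine ⟨e :: A, a, B, by rw [hπ]; rfl, ha, ?_⟩
      intro x hx
      rcases List.mem_cons.mp hx with rfl | hmem
      · exact he
      · exact hA x hmem

/-! ### restrictMem lemmas -/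

theorem restrictMem_append (π π' : List (Ev Proc Var Val Op Ret)) :
    restrictMem (π ++ π') = restrictMem π ++ restrictMem π' :=
  List.filterMap_append

theorem restrictObj_append (π π' : List (Ev Proc Var Val Op Ret)) :
    restrictObj (π ++ π') = restrictObj π ++ restrictObj π' :=
  List.filterMap_append

theorem restrictMem_cons_inv (p : Proc) (o : Op) (π : List (Ev Proc Var Val Op Ret)) :
    restrictMem (⟨p, EvAct.inv o⟩ :: π) = restrictMem π := by
  simp [restrictMem, List.filterMap_cons, Ev.toMem]

theorem toMem_some {e : Ev Proc Var Val Op Ret} {x : MemEv Proc Var Val}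
    (h : Ev.toMem e = some x) : e.proc = x.proc ∧ e.act = EvAct.mem x.act := by
  obtain ⟨q, act⟩ := e
  cases act <;> simp [Ev.toMem] at h <;> subst h <;> exact ⟨rfl, rfl⟩

theorem restrictMem_proc {π : List (Ev Proc Var Val Op Ret)} {p : Proc}
    (h : ∀ e ∈ π, Ev.proc e = p) : ∀ x ∈ restrictMem π, MemEv.proc x = p := by
  intro x hx
  obtain ⟨e, he, hte⟩ := List.mem_filterMap.mp hx
  rw [← (toMem_some hte).1]
  exact h e he

theorem restrictMem_no_fence {π : List (Ev Proc Var Val Op Ret)}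
    (h : ∀ e ∈ π, ¬ Ev.isFenceEv e) : ∀ x ∈ restrictMem π, ¬ MemEv.isFence x := by
  intro x hx hf
  obtain ⟨e, he, hte⟩ := List.mem_filterMap.mp hx
  apply h e he
  have := (toMem_some hte).2
  rw [Ev.isFenceEv, this, hf]

theorem exists_fence_ev {π : List (Ev Proc Var Val Op Ret)} {x : MemEv Proc Var Val}
    (hx : x ∈ restrictMem π) (hf : MemEv.isFence x) : ∃ e ∈ π, Ev.isFenceEv e := by
  obtain ⟨e, he, hte⟩ := List.mem_filterMap.mp hx
  refine ⟨e, he, ?_⟩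
  rw [Ev.isFenceEv, (toMem_some hte).2, hf]

theorem restrictMem_fence_ev {a : Ev Proc Var Val Op Ret} (hf : Ev.isFenceEv a) :
    restrictMem [a] = [⟨a.proc, MemAct.fence⟩] := by
  obtain ⟨q, act⟩ := a
  rw [Ev.isFenceEv] at hf
  simp only at hf
  subst hf
  simp [restrictMem, List.filterMap_cons, Ev.toMem]

end PatAux
/-! ### Endgame: consistency + determinism yield a contradiction -/

section Endgame

set_option linter.unusedSectionVars false

variable {Proc Var Val Op Ret : Type} [DecidableEq Proc]

theorem endgame {Spec : Set (List (ObjEv Proc Op Ret))}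
    (hdet : Deterministic Spec)
    {I : Impl Proc Var Val Op Ret} {M : MemModel Proc Var Val}
    (hcons : Consistent I M Spec)
    {h0 : List (ObjEv Proc Op Ret)} {p1 p2 : Proc} {o1 o2 : Op} {u1 v1 u2 : Ret}
    (hcs0 : CompleteSeq h0) (huv : u1 ≠ v1)
    (hin2 : h0 ++ invres p2 o2 u2 ++ invres p1 o1 v1 ∈ Spec)
    {πfull : List (Ev Proc Var Val Op Ret)}
    (htr : πfull ∈ ImplTraces I)
    (hobj : restrictObj πfull = h0 ++ (invres p2 o2 u2 ++ invres p1 o1 u1))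
    (hmem : restrictMem πfull ∈ M.OTraces M.init) : False := by
  have hgen : restrictObj πfull ∈ GenHist [] I M :=
    ⟨πfull, by simpa using htr, rfl, by simpa using hmem⟩
  have hcsfull : CompleteSeq (restrictObj πfull) := by
    rw [hobj]
    exact hcs0.append_cs ((CompleteSeq.invres_cs p2 o2 u2).append_cs
      (CompleteSeq.invres_cs p1 o1 u1))
  obtain ⟨h', hh'S, hre⟩ := hcons _ hgen (completeH_of_completeSeq hcsfull)
  have hfullSpec : restrictObj πfull ∈ Spec := by
    rw [← reorder_completeSeq_eq hcsfull hre]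
    exact hh'S
  rw [hobj] at hfullSpec
  set g := h0 ++ invres p2 o2 u2 with hg
  have heq1 : h0 ++ (invres p2 o2 u2 ++ invres p1 o1 u1)
      = (g ++ [⟨p1, ObjAct.inv o1⟩]) ++ [⟨p1, ObjAct.res u1⟩] := by
    simp [hg, invres]
  have heq2 : h0 ++ invres p2 o2 u2 ++ invres p1 o1 v1
      = (g ++ [⟨p1, ObjAct.inv o1⟩]) ++ [⟨p1, ObjAct.res v1⟩] := by
    simp [hg, invres]
  obtain ⟨e, he1, he2⟩ := hdet _ hfullSpec _ hin2 g p1 o1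
    ⟨[⟨p1, ObjAct.res u1⟩], heq1.symm⟩ ⟨[⟨p1, ObjAct.res v1⟩], heq2.symm⟩
  have hsplit : ∀ (w : Ret), (g ++ [⟨p1, ObjAct.inv o1⟩, e]) =
      (g ++ [⟨p1, ObjAct.inv o1⟩]) ++ [e] := by intro w; simp
  have he1' : [e] <+: [(⟨p1, ObjAct.res u1⟩ : ObjEv Proc Op Ret)] := by
    rw [heq1] at he1
    rw [hsplit u1] at he1
    exact (List.prefix_append_right_inj _).mp he1
  have he2' : [e] <+: [(⟨p1, ObjAct.res v1⟩ : ObjEv Proc Op Ret)] := by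
    rw [heq2] at he2
    rw [hsplit v1] at he2
    exact (List.prefix_append_right_inj _).mp he2
  obtain ⟨t1, ht1⟩ := he1'
  obtain ⟨t2, ht2⟩ := he2'
  have hee1 : e = ⟨p1, ObjAct.res u1⟩ := by
    have := List.head_eq_of_cons_eq (by simpa using ht1)
    exact this
  have hee2 : e = ⟨p1, ObjAct.res v1⟩ := by
    have := List.head_eq_of_cons_eq (by simpa using ht2)
    exact this
  rw [hee1] at hee2
  injection hee2 with _ hact
  injection hact with huv'
  exact huv huv'

end Endgame
/-! ### Setup: extracting the canonical traces from availability -/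

structure SetupData {Proc Var Val Op Ret : Type} [DecidableEq Proc]
    [DecidableEq Var] [Zero Val]
    (I : Impl Proc Var Val Op Ret)
    (h0 : List (ObjEv Proc Op Ret)) (p1 p2 : Proc) (o1 o2 : Op) (u1 u2 : Ret) where
  π0 : List (Ev Proc Var Val Op Ret)
  πc : List (Ev Proc Var Val Op Ret)
  πa : List (Ev Proc Var Val Op Ret)
  ρ1 : List (Ev Proc Var Val Op Ret)
  ρ2 : List (Ev Proc Var Val Op Ret)
  m0 : Var → Val
  mc : Var → Val
  ma : Var → Val
  htr : π0 ++ (πc ++ πa) ∈ ImplTraces I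
  hobj : restrictObj (π0 ++ (πc ++ πa)) = h0 ++ (invres p2 o2 u2 ++ invres p1 o1 u1)
  p0 : LTSPath (PStep (SCMStep Proc Var Val)) (fun _ => 0) (restrictMem π0) m0
  pc : LTSPath (PStep (SCMStep Proc Var Val)) m0 (restrictMem πc) mc
  pa : LTSPath (PStep (SCMStep Proc Var Val)) m0 (restrictMem πa) ma
  hprocc : ∀ e ∈ restrictMem πc, MemEv.proc e = p2
  hproca : ∀ e ∈ restrictMem πa, MemEv.proc e = p1
  hρ1 : ρ1 ∈ (I o1 p1).traces
  hρ2 : ρ2 ∈ (I o2 p2).traces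
  hm1 : restrictMem ρ1 = restrictMem πa
  hm2 : restrictMem ρ2 = restrictMem πc

section Setup

set_option linter.unusedSectionVars false

variable {Proc Var Val Op Ret : Type} [DecidableEq Proc] [DecidableEq Var] [Zero Val]

theorem setup {Spec : Set (List (ObjEv Proc Op Ret))} (hSpec : IsSpec Spec)
    {o1 o2 : Op} {h0 : List (ObjEv Proc Op Ret)} {p1 p2 : Proc} {u1 v1 u2 : Ret}
    (hcs0 : CompleteSeq h0) (hp12 : p1 ≠ p2)
    (hin1 : h0 ++ invres p1 o1 u1 ∈ Spec)
    (hin2 : h0 ++ invres p2 o2 u2 ++ invres p1 o1 v1 ∈ Spec)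
    {I : Impl Proc Var Val Op Ret} (hav : SpecAvailable I Spec) :
    Nonempty (SetupData (Var := Var) (Val := Val) I h0 p1 p2 o1 o2 u1 u2) := by
  have hSpec0 : h0 ∈ Spec :=
    hSpec.2 _ hin1 h0 ⟨invres p1 o1 u1, rfl⟩ hcs0
  have hnilTr : ([] : List (Ev Proc Var Val Op Ret)) ∈ ImplTraces I :=
    ⟨fun _ => none, LTSPath.nil _⟩
  have hnilMem : restrictMem ([] : List (Ev Proc Var Val Op Ret))
      ∈ (SCMModel Proc Var Val).OTraces (SCMModel Proc Var Val).init :=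
    ⟨[], (SCMModel Proc Var Val).init, LTSPath.nil _, rfl⟩
  have hgen0 : h0 ∈ GenHist [] I (SCMModel Proc Var Val) :=
    hav [] h0 CompleteSeq.nil hcs0 (by simpa using hSpec0) [] hnilTr hnilMem rfl
  obtain ⟨π0, htr0, hobj0, hmem0⟩ := hgen0
  rw [List.nil_append] at htr0 hmem0
  -- solo run of o1 by p1 after π0
  have hgena : invres p1 o1 u1 ∈ GenHist π0 I (SCMModel Proc Var Val) :=
    hav h0 (invres p1 o1 u1) hcs0 (CompleteSeq.invres_cs p1 o1 u1) hin1 π0 htr0 hmem0 hobj0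
  obtain ⟨πa, htra, hobja, hmema⟩ := hgena
  -- solo run of o2 by p2 after π0
  have hinc : h0 ++ invres p2 o2 u2 ∈ Spec :=
    hSpec.2 _ hin2 _ ⟨invres p1 o1 v1, rfl⟩
      (hcs0.append_cs (CompleteSeq.invres_cs p2 o2 u2))
  have hgenc : invres p2 o2 u2 ∈ GenHist π0 I (SCMModel Proc Var Val) :=
    hav h0 (invres p2 o2 u2) hcs0 (CompleteSeq.invres_cs p2 o2 u2) hinc π0 htr0 hmem0 hobj0
  obtain ⟨πc, htrc, hobjc, hmemc⟩ := hgenc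
  -- pure SCM paths
  obtain ⟨m0, p0⟩ := scm_obs_mem hmem0
  obtain ⟨ma', pfulla⟩ := scm_obs_mem hmema
  rw [restrictMem_append] at pfulla
  obtain ⟨mA, p0a, pa⟩ := pfulla.split
  have hmA : mA = m0 := scm_path_det p0a p0
  rw [hmA] at pa
  obtain ⟨mc', pfullc⟩ := scm_obs_mem hmemc
  rw [restrictMem_append] at pfullc
  obtain ⟨mC, p0c, pc⟩ := pfullc.split
  have hmC : mC = m0 := scm_path_det p0c p0
  rw [hmC] at pc
  -- system paths
  obtain ⟨enda, hfa⟩ := htra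
  obtain ⟨t0a, h0a, haa⟩ := hfa.split
  have ht0a : t0a = fun _ => none := sys_end_none h0a (by rw [hobj0]; exact hcs0)
  subst ht0a
  obtain ⟨endc, hfc⟩ := htrc
  obtain ⟨t0c, h0c, hcc⟩ := hfc.split
  have ht0c : t0c = fun _ => none := sys_end_none h0c (by rw [hobj0]; exact hcs0)
  subst ht0c
  -- all events in πa are p1's, in πc are p2's
  have hobjpa : ∀ x ∈ restrictObj πa, ObjEv.proc x = p1 := by
    rw [hobja]
    intro x hx
    simp only [invres, List.mem_cons, List.mem_singleton] at hx
    rcases hx with rfl | rfl | hx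
    · rfl
    · rfl
    · simp at hx
  have hobjpc : ∀ x ∈ restrictObj πc, ObjEv.proc x = p2 := by
    rw [hobjc]
    intro x hx
    simp only [invres, List.mem_cons, List.mem_singleton] at hx
    rcases hx with rfl | rfl | hx
    · rfl
    · rfl
    · simp at hx
  have hsoloa := sys_solo haa (fun q _ => rfl) hobjpa
  have hsoloc := sys_solo hcc (fun q _ => rfl) hobjpc
  -- compose the full trace
  have hframe := sys_frame hsoloa.1 haa endc (by rw [hsoloc.2 p1 hp12])
  have hfull : LTSPath (SIStep I) (fun _ => none) (π0 ++ (πc ++ πa))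
      (Function.update endc p1 (enda p1)) :=
    h0a.append_path (hcc.append_path hframe)
  -- extract operation traces
  have hproja := sys_project haa p1
  rw [List.filter_eq_self.mpr (fun e he => by simp [hsoloa.1 e he])] at hproja
  obtain ⟨ρ1, q1, hπaeq, hρ1p⟩ := sip_extract hproja (by rw [hobja]; rfl)
  have hprojc := sys_project hcc p2
  rw [List.filter_eq_self.mpr (fun e he => by simp [hsoloc.1 e he])] at hprojc
  obtain ⟨ρ2, q2, hπceq, hρ2p⟩ := sip_extract hprojc (by rw [hobjc]; rfl)
  exact ⟨{
    π0 := π0, πc := πc, πa := πa, ρ1 := ρ1, ρ2 := ρ2,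
    m0 := m0, mc := mc', ma := ma',
    htr := ⟨_, hfull⟩,
    hobj := by rw [restrictObj_append, restrictObj_append, hobj0, hobjc, hobja],
    p0 := p0, pc := pc, pa := pa,
    hprocc := restrictMem_proc hsoloc.1,
    hproca := restrictMem_proc hsoloa.1,
    hρ1 := ⟨q1, hρ1p⟩,
    hρ2 := ⟨q2, hρ2p⟩,
    hm1 := by rw [hπaeq, restrictMem_cons_inv],
    hm2 := by rw [hπceq, restrictMem_cons_inv] }⟩

end Setup

/-- lower bounds for implementations of objects with a one-sided
non-commutative pair of operations, under TSO and under RA. -/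
theorem one_sided_lower (Proc Var Val Op Ret : Type) [Fintype Proc] [DecidableEq Proc]
    [DecidableEq Var] [Zero Val]
    (Spec : Set (List (ObjEv Proc Op Ret))) (hSpec : IsSpec Spec)
    (hdet : Deterministic Spec)
    (o1 o2 : Op) (hnc : OneSidedNonComm Spec o1 o2)
    (I : Impl Proc Var Val Op Ret) (hav : SpecAvailable I Spec) :
    (Consistent I (TSOModel Proc Var Val) Spec →
      ∃ (p1 p2 : Proc) (π1 π2 : List (Ev Proc Var Val Op Ret)),
        π1 ∈ (I o1 p1).traces ∧ π2 ∈ (I o2 p2).traces ∧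
        ((∃ e ∈ restrictMem π1, MemEv.isFence e ∨ MemEv.isRMW e) ∨
         (∃ e ∈ restrictMem π2, MemEv.isFence e ∨ MemEv.isRMW e))) ∧
    (Consistent I (RAModel Proc Var Val) Spec →
      ∃ (p1 p2 : Proc) (π1 π2 : List (Ev Proc Var Val Op Ret)),
        π1 ∈ (I o1 p1).traces ∧ π2 ∈ (I o2 p2).traces ∧
        ¬ IsRW (restrictMem π1) ∧ ¬ IsRW (restrictMem π2) ∧
        ((∃ e ∈ restrictMem π1, MemEv.isRMW e) ∨
         (∃ e ∈ restrictMem π2, MemEv.isRMW e) ∨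
         ¬ IsLTF (restrictMem π1) ∨ ¬ IsLTF (restrictMem π2) ∨
         (IsLF (restrictMem π1) ∧ IsTF (restrictMem π2)) ∨
         (IsTF (restrictMem π1) ∧ IsLF (restrictMem π2)))) := by
  classical
  obtain ⟨h0, p1, p2, u1, v1, u2, hcs0, hp12, huv, hin1, hin2⟩ := hnc
  obtain ⟨S⟩ := setup (Var := Var) (Val := Val) hSpec hcs0 hp12 hin1 hin2 hav
  constructor
  · -- TSO
    intro hcons
    by_contra hno
    have hclean : ∀ e ∈ restrictMem S.ρ2, ¬(MemEv.isFence e ∨ MemEv.isRMW e) := by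
      intro e he hfr
      exact hno ⟨p1, p2, [], S.ρ2, ⟨_, LTSPath.nil _⟩, S.hρ2, Or.inr ⟨e, he, hfr⟩⟩
    rw [S.hm2] at hclean
    have hrwc : ∀ e ∈ restrictMem S.πc, MemEv.isWrite e ∨ MemEv.isRead e := by
      intro e he
      rcases mem_act_cases e.act with ⟨x, v, ha⟩ | ⟨x, v, ha⟩ | ⟨x, v, w, ha⟩ | ha
      · exact Or.inl ⟨x, v, ha⟩
      · exact Or.inr ⟨x, v, ha⟩
      · exact absurd (Or.inr ⟨x, v, w, ha⟩) (hclean e he)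
      · exact absurd (Or.inl ha) (hclean e he)
    have h1 : OPath (TSOStep Proc Var Val) ((fun _ => 0), (fun _ => []))
        (restrictMem S.π0) (S.m0, (fun _ => [])) :=
      tso_eager S.p0 _ (fun e _ => rfl)
    obtain ⟨l', h2⟩ := tso_buffered (p := p2) (B := fun _ => []) (m := S.m0)
      (l := []) (σ := restrictMem S.πc) S.pc S.hprocc hrwc
    rw [Function.update_eq_self p2 (fun _ => [])] at h2
    have h3 : OPath (TSOStep Proc Var Val) (S.m0, Function.update (fun _ => []) p2 l')
        (restrictMem S.πa) (S.ma, Function.update (fun _ => []) p2 l') :=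
      tso_eager S.pa _ (fun e he => by
        rw [S.hproca e he, Function.update_of_ne hp12])
    refine endgame hdet hcons hcs0 huv hin2 S.htr S.hobj ?_
    rw [restrictMem_append, restrictMem_append]
    exact mem_OTraces_of_OPath (h1.append_opath (h2.append_opath h3))
  · -- RA
    intro hcons
    by_contra hno
    have HND : ∀ (π1 π2 : List (Ev Proc Var Val Op Ret)),
        π1 ∈ (I o1 p1).traces → π2 ∈ (I o2 p2).traces →
        ¬ IsRW (restrictMem π1) → ¬ IsRW (restrictMem π2) →
        ¬ ((∃ e ∈ restrictMem π1, MemEv.isRMW e) ∨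
           (∃ e ∈ restrictMem π2, MemEv.isRMW e) ∨
           ¬ IsLTF (restrictMem π1) ∨ ¬ IsLTF (restrictMem π2) ∨
           (IsLF (restrictMem π1) ∧ IsTF (restrictMem π2)) ∨
           (IsTF (restrictMem π1) ∧ IsLF (restrictMem π2))) := by
      intro π1 π2 ht1 ht2 h3 h4 hD
      exact hno ⟨p1, p2, π1, π2, ht1, ht2, h3, h4, hD⟩
    by_cases hRWc : IsRW (restrictMem S.πc)
    · -- CB3 : o2's trace is read/write only
      obtain ⟨s1, T0, hop0, hF⟩ := ra_flat S.p0 _ _ ra_init_flat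
      have hH : HighInv p2 S.m0 T0 (fun x => T0 x + (restrictMem S.πa).length) s1 :=
        { vp := hF.views p2
          msg := hF.msg
          bound := fun μ hμ => le_trans (hF.bound μ hμ) (by omega)
          TleB := fun x => by omega }
      obtain ⟨s2, hopc, hviews2, hfv2, hsub2, hnew2⟩ :=
        ra_high S.pc S.hprocc hRWc s1 T0 _ hH
      have hC : ConsInv p1 S.m0 T0 (restrictMem S.πa).length s2 :=
        { vp := by rw [hviews2 p1 hp12, hF.views p1]
          fv := fun x => by rw [hfv2]; exact hF.fv x
          msg := fun x => (hF.msg x).imp (fun V hV => hsub2 hV)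
          gap := fun μ hμ => by
            rcases hnew2 μ hμ with hμ1 | hμ1
            · exact Or.inl (hF.bound μ hμ1)
            · exact Or.inr hμ1 }
      obtain ⟨s3, T3, hopa, _, _, _, _⟩ := ra_cons S.pa S.hproca (le_refl _) s2 T0 hC
      refine endgame hdet hcons hcs0 huv hin2 S.htr S.hobj ?_
      rw [restrictMem_append, restrictMem_append]
      exact mem_OTraces_of_OPath (hop0.append_opath (hopc.append_opath hopa))
    · by_cases hTFa : (∀ e ∈ restrictMem S.πa, ¬ MemEv.isRMW e) ∧ IsTF (restrictMem S.πa)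
      · -- CB12 : o1's trace is (reads/writes) ++ fences
        have hdecomp : ∃ w fs, restrictMem S.πa = w ++ fs ∧
            (∀ e ∈ w, MemEv.isWrite e ∨ MemEv.isRead e) ∧
            (∀ e ∈ fs, MemEv.isFence e) := by
          by_cases hf : ∃ e ∈ restrictMem S.πa, MemEv.isFence e
          · obtain ⟨A, a, B, hsplit, ha, hA⟩ := exists_first MemEv.isFence _ hf
            refine ⟨A, a :: B, hsplit, ?_, ?_⟩
            · intro e he
              have heσ : e ∈ restrictMem S.πa := by rw [hsplit]; exact List.mem_append_left _ he
              rcases mem_act_cases e.act with ⟨x, v, hact⟩ | ⟨x, v, hact⟩ | ⟨x, v, w, hact⟩ | hact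
              · exact Or.inl ⟨x, v, hact⟩
              · exact Or.inr ⟨x, v, hact⟩
              · exact absurd ⟨x, v, w, hact⟩ (hTFa.1 e heσ)
              · exact absurd hact (hA e he)
            · intro e he
              rcases List.mem_cons.mp he with rfl | hmem
              · exact ha
              · exact tf_fences_after hTFa.2 hsplit ha e hmem
          · push_neg at hf
            refine ⟨restrictMem S.πa, [], (List.append_nil _).symm, ?_, by simp⟩
            intro e he
            rcases mem_act_cases e.act with ⟨x, v, hact⟩ | ⟨x, v, hact⟩ | ⟨x, v, w, hact⟩ | hact
            · exact Or.inl ⟨x, v, hact⟩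
            · exact Or.inr ⟨x, v, hact⟩
            · exact absurd ⟨x, v, w, hact⟩ (hTFa.1 e he)
            · exact absurd hact (hf e he)
        obtain ⟨w, fs, hwfs, hwrw, hfsf⟩ := hdecomp
        have hpa' := S.pa
        rw [hwfs] at hpa'
        obtain ⟨mW, pW, pFs⟩ := hpa'.split
        obtain ⟨s1, T0, hop0, hF⟩ := ra_flat S.p0 _ _ ra_init_flat
        have hC : ConsInv p2 S.m0 T0 (restrictMem S.πc).length s1 :=
          { vp := hF.views p2
            fv := hF.fv
            msg := hF.msg
            gap := fun μ hμ => Or.inl (hF.bound μ hμ) }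
        obtain ⟨s2, T2, hopc, hviews2, hsub2, hnew2, hTT2⟩ :=
          ra_cons S.pc S.hprocc (le_refl _) s1 T0 hC
        have hH : HighInv p1 S.m0 T0 (fun x => T0 x + (restrictMem S.πc).length) s2 :=
          { vp := by rw [hviews2 p1 hp12, hF.views p1]
            msg := fun x => (hF.msg x).imp (fun V hV => hsub2 hV)
            bound := fun μ hμ => by
              rcases hnew2 μ hμ with hμ1 | hμ1
              · exact le_trans (hF.bound μ hμ1) (by omega)
              · have := (hTT2 μ.var).2; omega
            TleB := fun x => by omega }
        have hwp : ∀ e ∈ w, MemEv.proc e = p1 := fun e he =>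
          S.hproca e (by rw [hwfs]; exact List.mem_append_left _ he)
        obtain ⟨s3, hopw, _, _, _, _⟩ := ra_high pW hwp hwrw s2 T0 _ hH
        obtain ⟨s4, hopf⟩ := ra_fences fs hfsf s3
        have hopa : OPath (RAStep Proc Var Val) s2 (restrictMem S.πa) s4 := by
          rw [hwfs]; exact hopw.append_opath hopf
        refine endgame hdet hcons hcs0 huv hin2 S.htr S.hobj ?_
        rw [restrictMem_append, restrictMem_append]
        exact mem_OTraces_of_OPath (hop0.append_opath (hopc.append_opath hopa))
      · -- combinatorial case: derive a contradiction without any construction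
        have hRWa : ¬ IsRW (restrictMem S.πa) := by
          intro hRW
          apply hTFa
          constructor
          · intro e he hrmw
            obtain ⟨a, b, c, hh⟩ := hrmw
            rcases hRW e he with ⟨x, v, h⟩ | ⟨x, v, h⟩ <;> simp_all
          · exact isTF_of_no_fence (fun e he hfe => by
              rcases hRW e he with ⟨x, v, h⟩ | ⟨x, v, h⟩ <;>
                rw [MemEv.isFence] at hfe <;> simp_all)
        have hD := HND S.ρ1 S.ρ2 S.hρ1 S.hρ2 (by rw [S.hm1]; exact hRWa)
          (by rw [S.hm2]; exact hRWc)
        rw [S.hm1, S.hm2] at hD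
        have hrmwa : ∀ e ∈ restrictMem S.πa, ¬ MemEv.isRMW e :=
          fun e he hr => hD (Or.inl ⟨e, he, hr⟩)
        have hrmwc : ∀ e ∈ restrictMem S.πc, ¬ MemEv.isRMW e :=
          fun e he hr => hD (Or.inr (Or.inl ⟨e, he, hr⟩))
        have hLTFa : IsLTF (restrictMem S.πa) := by
          by_contra h
          exact hD (Or.inr (Or.inr (Or.inl h)))
        have hfa : ∃ e ∈ restrictMem S.πa, MemEv.isFence e := by
          by_contra hnf
          push_neg at hnf
          exact hTFa ⟨hrmwa, isTF_of_no_fence hnf⟩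
        have hfc : ∃ e ∈ restrictMem S.πc, MemEv.isFence e := by
          obtain ⟨e, he, hfr⟩ := fence_or_rmw_of_not_isRW hRWc
          rcases hfr with hfe | hre
          · exact ⟨e, he, hfe⟩
          · exact absurd hre (hrmwc e he)
        -- first-fence prefixes of the two operation traces
        have hfev1 : ∃ e ∈ S.ρ1, Ev.isFenceEv e := by
          obtain ⟨x, hx, hfx⟩ := hfa
          rw [← S.hm1] at hx
          exact exists_fence_ev hx hfx
        have hfev2 : ∃ e ∈ S.ρ2, Ev.isFenceEv e := by
          obtain ⟨x, hx, hfx⟩ := hfc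
          rw [← S.hm2] at hx
          exact exists_fence_ev hx hfx
        obtain ⟨A1, a1, B1, hr1, ha1, hA1⟩ := exists_first_fence hfev1
        obtain ⟨A2, a2, B2, hr2, ha2, hA2⟩ := exists_first_fence hfev2
        have hρ1' : (A1 ++ [a1]) ∈ (I o1 p1).traces := by
          obtain ⟨q, hq⟩ := S.hρ1
          rw [hr1, show A1 ++ a1 :: B1 = (A1 ++ [a1]) ++ B1 by simp] at hq
          obtain ⟨t, ht, _⟩ := hq.split
          exact ⟨t, ht⟩
        have hρ2' : (A2 ++ [a2]) ∈ (I o2 p2).traces := by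
          obtain ⟨q, hq⟩ := S.hρ2
          rw [hr2, show A2 ++ a2 :: B2 = (A2 ++ [a2]) ++ B2 by simp] at hq
          obtain ⟨t, ht, _⟩ := hq.split
          exact ⟨t, ht⟩
        have hσ1' : restrictMem (A1 ++ [a1])
            = restrictMem A1 ++ [⟨a1.proc, MemAct.fence⟩] := by
          rw [restrictMem_append, restrictMem_fence_ev ha1]
        have hσ2' : restrictMem (A2 ++ [a2])
            = restrictMem A2 ++ [⟨a2.proc, MemAct.fence⟩] := by
          rw [restrictMem_append, restrictMem_fence_ev ha2]
        have hfe1 : (⟨a1.proc, MemAct.fence⟩ : MemEv Proc Var Val) ∈ restrictMem (A1 ++ [a1]) := by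
          rw [hσ1']; exact List.mem_append_right _ (List.mem_singleton_self _)
        have hfe2 : (⟨a2.proc, MemAct.fence⟩ : MemEv Proc Var Val) ∈ restrictMem (A2 ++ [a2]) := by
          rw [hσ2']; exact List.mem_append_right _ (List.mem_singleton_self _)
        have hnRW1 : ¬ IsRW (restrictMem (A1 ++ [a1])) :=
          not_isRW_of_mem hfe1 (Or.inl rfl)
        have hnRW2 : ¬ IsRW (restrictMem (A2 ++ [a2])) :=
          not_isRW_of_mem hfe2 (Or.inl rfl)
        have hTF1' : IsTF (restrictMem (A1 ++ [a1])) := by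
          rw [hσ1']
          exact isTF_concat (restrictMem_no_fence hA1)
            (by intro e he; rw [List.mem_singleton] at he; subst he; rfl)
        have hTF2' : IsTF (restrictMem (A2 ++ [a2])) := by
          rw [hσ2']
          exact isTF_concat (restrictMem_no_fence hA2)
            (by intro e he; rw [List.mem_singleton] at he; subst he; rfl)
        have hD' := HND (A1 ++ [a1]) (A2 ++ [a2]) hρ1' hρ2' hnRW1 hnRW2
        have hnLF1 : ¬ IsLF (restrictMem (A1 ++ [a1])) := fun hLF =>
          hD' (Or.inr (Or.inr (Or.inr (Or.inr (Or.inl ⟨hLF, hTF2'⟩)))))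
        have hw1ne : restrictMem A1 ≠ [] := by
          intro h0
          apply hnLF1
          rw [hσ1', h0, List.nil_append]
          exact isLF_of_all_fence
            (by intro e he; rw [List.mem_singleton] at he; subst he; rfl)
        have hσa_split : restrictMem S.πa
            = restrictMem A1 ++ (⟨a1.proc, MemAct.fence⟩ :: restrictMem B1) := by
          rw [← S.hm1, hr1, show A1 ++ a1 :: B1 = A1 ++ ([a1] ++ B1) by simp,
            restrictMem_append, restrictMem_append, restrictMem_fence_ev ha1]
          rfl
        have hTFa' : IsTF (restrictMem S.πa) :=
          ltf_first_fence_tf hLTFa hσa_split (restrictMem_no_fence hA1) rfl hw1ne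
        exact hTFa ⟨hrmwa, hTFa'⟩

end WMM
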